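/- arXiv:2104.01486 — 14 statements merged into one kernel-verified Lean document; each statement's English description precedes it below -/
import Mathlib

section
/- Let E be a finite-dimensional vector space over a field F and let I be a collection of subspaces of E satisfying the independence axioms (I1), (I2), (I3). Then the following three conditions are pairwise equivalent: (I4) for all subspaces A, B of E and all I ∈ max(A,I), J ∈ max(B,I), there exists K ∈ max(A+B,I) with K ⊆ I+J; (I4') for every subspace A of E, every I ∈ max(A,I) and every subspace B of E, there exists J ∈ max(A+B,I) with J ⊆ I+B; (I4'') for every subspace A of E, every I ∈ max(A,I) and every 1-dimensional subspace x of E, there exists J ∈ max(x+A,I) with J ⊆ x+I. -/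
open Module

/-- The set of members of `𝓘` contained in `X` of maximal dimension among
members of `𝓘` contained in `X`. -/
def maxIn {K E : Type*} [Field K] [AddCommGroup E] [Module K E]
    (X : Submodule K E) (𝓘 : Set (Submodule K E)) : Set (Submodule K E) :=
  {A | A ∈ 𝓘 ∧ A ≤ X ∧ ∀ B ∈ 𝓘, B ≤ X → finrank K B ≤ finrank K A}

lemma maxIn_nonempty {K E : Type*} [Field K] [AddCommGroup E] [Module K E]
    [FiniteDimensional K E] (𝓘 : Set (Submodule K E)) (hI1 : 𝓘.Nonempty)
    (hI2 : ∀ I J : Submodule K E, J ∈ 𝓘 → I ≤ J → I ∈ 𝓘) (X : Submodule K E) :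
    (maxIn X 𝓘).Nonempty := by
  obtain ⟨J0, hJ0⟩ := hI1
  have hbot : (⊥ : Submodule K E) ∈ 𝓘 := hI2 ⊥ J0 hJ0 bot_le
  set S : Set ℕ := (fun A : Submodule K E => finrank K A) '' {A | A ∈ 𝓘 ∧ A ≤ X} with hS
  have hSne : S.Nonempty := ⟨0, ⟨⊥, ⟨hbot, bot_le⟩, finrank_bot K E⟩⟩
  have hbdd : BddAbove S := ⟨finrank K E, by
    rintro n ⟨A, _, rfl⟩; exact A.finrank_le⟩
  obtain ⟨A, ⟨hA𝓘, hAX⟩, hA⟩ := Nat.sSup_mem hSne hbdd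
  have hA' : finrank K A = sSup S := hA
  exact ⟨A, hA𝓘, hAX, fun B hB hBX => hA' ▸ le_csSup hbdd ⟨B, ⟨hB, hBX⟩, rfl⟩⟩

theorem stmt0 {K E : Type*} [Field K] [AddCommGroup E] [Module K E] [FiniteDimensional K E]
    (𝓘 : Set (Submodule K E))
    (hI1 : 𝓘.Nonempty)
    (hI2 : ∀ I J : Submodule K E, J ∈ 𝓘 → I ≤ J → I ∈ 𝓘)
    (hI3 : ∀ I J : Submodule K E, I ∈ 𝓘 → J ∈ 𝓘 → finrank K I < finrank K J →
      ∃ x : Submodule K E, finrank K x = 1 ∧ x ≤ J ∧ ¬ x ≤ I ∧ I ⊔ x ∈ 𝓘) :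
    ((∀ A B I J : Submodule K E, I ∈ maxIn A 𝓘 → J ∈ maxIn B 𝓘 →
        ∃ K' ∈ maxIn (A ⊔ B) 𝓘, K' ≤ I ⊔ J) ↔
      (∀ A I : Submodule K E, I ∈ maxIn A 𝓘 → ∀ B : Submodule K E,
        ∃ J ∈ maxIn (A ⊔ B) 𝓘, J ≤ I ⊔ B)) ∧
    ((∀ A I : Submodule K E, I ∈ maxIn A 𝓘 → ∀ B : Submodule K E,
        ∃ J ∈ maxIn (A ⊔ B) 𝓘, J ≤ I ⊔ B) ↔
      (∀ A I : Submodule K E, I ∈ maxIn A 𝓘 → ∀ x : Submodule K E, finrank K x = 1 →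
        ∃ J ∈ maxIn (x ⊔ A) 𝓘, J ≤ x ⊔ I)) ∧
    ((∀ A B I J : Submodule K E, I ∈ maxIn A 𝓘 → J ∈ maxIn B 𝓘 →
        ∃ K' ∈ maxIn (A ⊔ B) 𝓘, K' ≤ I ⊔ J) ↔
      (∀ A I : Submodule K E, I ∈ maxIn A 𝓘 → ∀ x : Submodule K E, finrank K x = 1 →
        ∃ J ∈ maxIn (x ⊔ A) 𝓘, J ≤ x ⊔ I)) := by
  have hmax : ∀ X : Submodule K E, (maxIn X 𝓘).Nonempty := maxIn_nonempty 𝓘 hI1 hI2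
  -- (I4) → (I4')
  have h4to4' : (∀ A B I J : Submodule K E, I ∈ maxIn A 𝓘 → J ∈ maxIn B 𝓘 →
      ∃ K' ∈ maxIn (A ⊔ B) 𝓘, K' ≤ I ⊔ J) →
      (∀ A I : Submodule K E, I ∈ maxIn A 𝓘 → ∀ B : Submodule K E,
        ∃ J ∈ maxIn (A ⊔ B) 𝓘, J ≤ I ⊔ B) := by
    intro h4 A I hI B
    obtain ⟨J, hJ⟩ := hmax B
    obtain ⟨K', hK', hle⟩ := h4 A B I J hI hJ
    exact ⟨K', hK', hle.trans (sup_le_sup_left hJ.2.1 I)⟩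
  -- (I4') → (I4'')
  have h4'to4'' : (∀ A I : Submodule K E, I ∈ maxIn A 𝓘 → ∀ B : Submodule K E,
      ∃ J ∈ maxIn (A ⊔ B) 𝓘, J ≤ I ⊔ B) →
      (∀ A I : Submodule K E, I ∈ maxIn A 𝓘 → ∀ x : Submodule K E, finrank K x = 1 →
        ∃ J ∈ maxIn (x ⊔ A) 𝓘, J ≤ x ⊔ I) := by
    intro h4' A I hI x _
    obtain ⟨J, hJ, hle⟩ := h4' A I hI x
    exact ⟨J, by rwa [sup_comm x A], by rwa [sup_comm x I]⟩
  -- (I4'') → (I4')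
  have h4''to4' : (∀ A I : Submodule K E, I ∈ maxIn A 𝓘 → ∀ x : Submodule K E,
      finrank K x = 1 → ∃ J ∈ maxIn (x ⊔ A) 𝓘, J ≤ x ⊔ I) →
      (∀ A I : Submodule K E, I ∈ maxIn A 𝓘 → ∀ B : Submodule K E,
        ∃ J ∈ maxIn (A ⊔ B) 𝓘, J ≤ I ⊔ B) := by
    intro h4''
    suffices H : ∀ n : ℕ, ∀ B : Submodule K E, finrank K B = n →
        ∀ A I : Submodule K E, I ∈ maxIn A 𝓘 → ∃ J ∈ maxIn (A ⊔ B) 𝓘, J ≤ I ⊔ B by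
      intro A I hI B; exact H _ B rfl A I hI
    intro n
    induction n using Nat.strong_induction_on with
    | _ n ih =>
      intro B hBn A I hI
      rcases eq_or_ne B ⊥ with rfl | hBne
      · exact ⟨I, by simpa using hI, le_sup_left⟩
      · obtain ⟨v, hvB, hv0⟩ := Submodule.ne_bot_iff B |>.mp hBne
        set x : Submodule K E := Submodule.span K {v} with hxdef
        have hx1 : finrank K x = 1 := finrank_span_singleton hv0
        have hxB : x ≤ B := by
          rw [hxdef, Submodule.span_singleton_le_iff_mem]; exact hvB
        obtain ⟨C, hC⟩ := Submodule.exists_isCompl x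
        set B' : Submodule K E := C ⊓ B with hB'def
        have hsup : x ⊔ B' = B := by
          rw [hB'def, ← sup_inf_assoc_of_le C hxB, hC.sup_eq_top, top_inf_eq]
        have hdisj : x ⊓ B' = ⊥ := by
          have : x ⊓ B' ≤ x ⊓ C := inf_le_inf_left x inf_le_left
          rw [hC.inf_eq_bot] at this
          exact le_bot_iff.mp this
        have hrank : finrank K B = 1 + finrank K B' := by
          have := Submodule.finrank_sup_add_finrank_inf_eq x B'
          rw [hsup, hdisj, hx1] at this
          simpa using this
        have hlt : finrank K B' < n := by omega
        obtain ⟨J, hJ, hJle⟩ := ih (finrank K B') hlt B' rfl A I hI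
        obtain ⟨J', hJ', hJ'le⟩ := h4'' (A ⊔ B') J hJ x hx1
        refine ⟨J', ?_, ?_⟩
        · have : x ⊔ (A ⊔ B') = A ⊔ B := by
            rw [← hsup, sup_left_comm]
          rwa [this] at hJ'
        · calc J' ≤ x ⊔ J := hJ'le
            _ ≤ x ⊔ (I ⊔ B') := sup_le_sup_left hJle x
            _ = I ⊔ (x ⊔ B') := by rw [sup_comm x (I ⊔ B'), sup_assoc, sup_comm B' x]
            _ = I ⊔ B := by rw [hsup]
  -- (I4') → (I4)
  have h4'to4 : (∀ A I : Submodule K E, I ∈ maxIn A 𝓘 → ∀ B : Submodule K E,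
      ∃ J ∈ maxIn (A ⊔ B) 𝓘, J ≤ I ⊔ B) →
      (∀ A B I J : Submodule K E, I ∈ maxIn A 𝓘 → J ∈ maxIn B 𝓘 →
        ∃ K' ∈ maxIn (A ⊔ B) 𝓘, K' ≤ I ⊔ J) := by
    intro h4' A B I J hI hJ
    obtain ⟨M, hM, hMle⟩ := h4' A I hI B
    obtain ⟨K', hK', hKle⟩ := h4' B J hJ I
    refine ⟨K', ⟨hK'.1, ?_, ?_⟩, hKle.trans (sup_comm J I).le⟩
    · exact hK'.2.1.trans (sup_le (le_sup_right) (hI.2.1.trans le_sup_left))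
    · intro L hL hLle
      have h1 : finrank K L ≤ finrank K M := hM.2.2 L hL hLle
      have h2 : finrank K M ≤ finrank K K' :=
        hK'.2.2 M hM.1 (hMle.trans (sup_comm I B).le)
      omega
  exact ⟨⟨h4to4', h4'to4⟩, ⟨h4'to4'', h4''to4'⟩,
    ⟨fun h => h4'to4'' (h4to4' h), fun h => h4'to4 (h4''to4' h)⟩⟩
end

section
/- Let E be a finite-dimensional vector space over a field F and let I be a collection of subspaces of E satisfying the independence axioms (I1), (I2), (I3). Let A be a subspace of E, let x be a 1-dimensional subspace of E with x ⊄ A, let I ∈ max(A,I) and let M ∈ max(x+A,I). Then dim M ≤ dim I + 1. -/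
open Module

theorem stmt2 {K E : Type*} [Field K] [AddCommGroup E] [Module K E] [FiniteDimensional K E]
    (𝓘 : Set (Submodule K E))
    (hI1 : 𝓘.Nonempty)
    (hI2 : ∀ I J : Submodule K E, J ∈ 𝓘 → I ≤ J → I ∈ 𝓘)
    (hI3 : ∀ I J : Submodule K E, I ∈ 𝓘 → J ∈ 𝓘 → finrank K I < finrank K J →
      ∃ x : Submodule K E, finrank K x = 1 ∧ x ≤ J ∧ ¬ x ≤ I ∧ I ⊔ x ∈ 𝓘)
    (A x I M : Submodule K E) (hx : finrank K x = 1) (hxA : ¬ x ≤ A)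
    (hI : I ∈ maxIn A 𝓘) (hM : M ∈ maxIn (x ⊔ A) 𝓘) :
    finrank K M ≤ finrank K I + 1 := by
  obtain ⟨hM𝓘, hMle, _⟩ := hM
  obtain ⟨hI𝓘, hIle, hImax⟩ := hI
  have h1 : finrank K ↥(M ⊔ A) + finrank K ↥(M ⊓ A) = finrank K M + finrank K A :=
    Submodule.finrank_sup_add_finrank_inf_eq M A
  have h2 : finrank K ↥(x ⊔ A) + finrank K ↥(x ⊓ A) = finrank K x + finrank K A :=
    Submodule.finrank_sup_add_finrank_inf_eq x A
  have h3 : finrank K ↥(M ⊔ A) ≤ finrank K ↥(x ⊔ A) :=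
    Submodule.finrank_mono (sup_le (le_trans hMle le_rfl) le_sup_right)
  have h4 : finrank K ↥(M ⊓ A) ≤ finrank K I :=
    hImax _ (hI2 _ _ hM𝓘 inf_le_left) inf_le_right
  omega
end

section
/- Let E be a finite-dimensional vector space over a field F and let r be an integer-valued function on the subspaces of E. Then r satisfies the rank axioms (R1) 0 ≤ r(A) ≤ dim A for every subspace A, (R2) r(A) ≤ r(B) whenever A ⊆ B, and (R3) r(A+B) + r(A∩B) ≤ r(A) + r(B) for all subspaces A, B, if and only if r satisfies the local rank axioms (R1') r({0}) = 0, (R2') r(A) ≤ r(A+x) ≤ r(A)+1 for every subspace A and 1-dimensional subspace x, and (R3') if r(A) = r(A+x) = r(A+y) for 1-dimensional subspaces x, y then r(A+x+y) = r(A). -/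
open Module

section Aux

variable {K E : Type*} [Field K] [AddCommGroup E] [Module K E] [FiniteDimensional K E]
  (r : Submodule K E → ℤ)

private lemma aux_mono
    (h2 : ∀ (A x : Submodule K E), finrank K x = 1 →
        r A ≤ r (A ⊔ x) ∧ r (A ⊔ x) ≤ r A + 1) :
    ∀ n (A B : Submodule K E), A ≤ B → finrank K B - finrank K A ≤ n →
      r A ≤ r B ∧ r B ≤ r A + n := by
  intro n
  induction n with
  | zero =>
    intro A B hAB hle
    have hfr : finrank K B ≤ finrank K A := by omega
    have : A = B := Submodule.eq_of_le_of_finrank_le hAB hfr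
    subst this
    omega
  | succ n ih =>
    intro A B hAB hle
    by_cases hEq : A = B
    · subst hEq; omega
    · have hlt : A < B := lt_of_le_of_ne hAB hEq
      obtain ⟨y, hyB, hyA⟩ := SetLike.exists_of_lt hlt
      have hy0 : y ≠ 0 := fun h => hyA (h ▸ A.zero_mem)
      have hspan : finrank K (K ∙ y) = 1 := finrank_span_singleton hy0
      set A' := A ⊔ (K ∙ y) with hA'
      have hA'B : A' ≤ B := sup_le hAB ((Submodule.span_singleton_le_iff_mem y B).mpr hyB)
      have hAA' : A < A' := by
        refine lt_of_le_of_ne le_sup_left (fun h => hyA ?_)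
        have : y ∈ A' := Submodule.mem_sup_right (Submodule.mem_span_singleton_self y)
        rwa [← h] at this
      have hr1 := h2 A (K ∙ y) hspan
      have hfr : finrank K A < finrank K A' := Submodule.finrank_lt_finrank_of_lt hAA'
      have hfr2 : finrank K A' ≤ finrank K B := Submodule.finrank_mono hA'B
      have := ih A' B hA'B (by omega)
      constructor
      · linarith [hr1.1, this.1]
      · push_cast
        linarith [hr1.2, this.2]

private lemma aux_L1
    (h2 : ∀ (A x : Submodule K E), finrank K x = 1 →
        r A ≤ r (A ⊔ x) ∧ r (A ⊔ x) ≤ r A + 1)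
    (h3 : ∀ (A x y : Submodule K E), finrank K x = 1 → finrank K y = 1 →
        r (A ⊔ x) = r A → r (A ⊔ y) = r A → r (A ⊔ x ⊔ y) = r A) :
    ∀ n (D C x : Submodule K E), D ≤ C → finrank K x = 1 → r (D ⊔ x) = r D →
      finrank K C - finrank K D ≤ n → r (C ⊔ x) = r C := by
  intro n
  induction n with
  | zero =>
    intro D C x hDC hx hr hle
    have hfr : finrank K C ≤ finrank K D := by omega
    have : D = C := Submodule.eq_of_le_of_finrank_le hDC hfr
    subst this; exact hr
  | succ n ih =>
    intro D C x hDC hx hr hle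
    by_cases hEq : D = C
    · subst hEq; exact hr
    · have hlt : D < C := lt_of_le_of_ne hDC hEq
      obtain ⟨y, hyC, hyD⟩ := SetLike.exists_of_lt hlt
      have hy0 : y ≠ 0 := fun h => hyD (h ▸ D.zero_mem)
      have hspan : finrank K (K ∙ y) = 1 := finrank_span_singleton hy0
      set D' := D ⊔ (K ∙ y) with hD'
      have hD'C : D' ≤ C := sup_le hDC ((Submodule.span_singleton_le_iff_mem y C).mpr hyC)
      have hDD' : D < D' := by
        refine lt_of_le_of_ne le_sup_left (fun h => hyD ?_)
        have : y ∈ D' := Submodule.mem_sup_right (Submodule.mem_span_singleton_self y)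
        rwa [← h] at this
      have hstep : r (D' ⊔ x) = r D' := by
        by_cases hc : r (D ⊔ (K ∙ y)) = r D
        · have h3' := h3 D (K ∙ y) x hspan hx hc hr
          rw [hD']
          rw [sup_assoc] at h3' ⊢
          rw [sup_comm (K ∙ y) x] at h3' ⊢
          omega
        · have hb1 := h2 D (K ∙ y) hspan
          have hD'val : r D' = r D + 1 := by rw [hD']; omega
          have hb2 := h2 (D ⊔ x) (K ∙ y) hspan
          have hb3 := h2 D' x hx
          have hrw : D ⊔ x ⊔ (K ∙ y) = D' ⊔ x := by
            rw [hD', sup_assoc, sup_assoc, sup_comm x (K ∙ y)]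
          rw [hrw] at hb2
          omega
      have hfr : finrank K D < finrank K D' := Submodule.finrank_lt_finrank_of_lt hDD'
      have hfr2 : finrank K D' ≤ finrank K C := Submodule.finrank_mono hD'C
      exact ih D' C x hD'C hx hstep (by omega)

private lemma aux_submod
    (h2 : ∀ (A x : Submodule K E), finrank K x = 1 →
        r A ≤ r (A ⊔ x) ∧ r (A ⊔ x) ≤ r A + 1)
    (h3 : ∀ (A x y : Submodule K E), finrank K x = 1 → finrank K y = 1 →
        r (A ⊔ x) = r A → r (A ⊔ y) = r A → r (A ⊔ x ⊔ y) = r A) :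
    ∀ n (A B : Submodule K E), finrank K B - finrank K ↥(A ⊓ B) ≤ n →
      r (A ⊔ B) + r (A ⊓ B) ≤ r A + r B := by
  intro n
  induction n with
  | zero =>
    intro A B hle
    have hfr : finrank K B ≤ finrank K ↥(A ⊓ B) := by omega
    have hBA : A ⊓ B = B := Submodule.eq_of_le_of_finrank_le inf_le_right hfr
    have hBle : B ≤ A := by rw [← hBA]; exact inf_le_left
    rw [sup_eq_left.mpr hBle, hBA]
  | succ n ih =>
    intro A B hle
    by_cases hBle : B ≤ A
    · rw [sup_eq_left.mpr hBle, inf_eq_right.mpr hBle]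
    · obtain ⟨y, hyB, hyA⟩ := SetLike.not_le_iff_exists.mp hBle
      have hy0 : y ≠ 0 := fun h => hyA (h ▸ A.zero_mem)
      have hspan : finrank K (K ∙ y) = 1 := finrank_span_singleton hy0
      have hyleB : (K ∙ y) ≤ B := (Submodule.span_singleton_le_iff_mem y B).mpr hyB
      set A' := A ⊔ (K ∙ y) with hA'
      have hsup : A' ⊔ B = A ⊔ B := by
        rw [hA', sup_assoc, sup_eq_right.mpr hyleB]
      have hinf : A' ⊓ B = (A ⊓ B) ⊔ (K ∙ y) := by
        rw [hA', sup_comm A (K ∙ y), sup_comm (A ⊓ B) (K ∙ y)]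
        exact sup_inf_assoc_of_le A hyleB
      have hinf_lt : A ⊓ B < A' ⊓ B := by
        rw [hinf]
        refine lt_of_le_of_ne le_sup_left (fun h => hyA ?_)
        have : y ∈ (A ⊓ B) ⊔ (K ∙ y) := Submodule.mem_sup_right (Submodule.mem_span_singleton_self y)
        rw [← h] at this
        exact this.1
      have hfr : finrank K ↥(A ⊓ B) < finrank K ↥(A' ⊓ B) :=
        Submodule.finrank_lt_finrank_of_lt hinf_lt
      have hfr2 : finrank K ↥(A' ⊓ B) ≤ finrank K B := Submodule.finrank_mono inf_le_right
      have hIH := ih A' B (by omega)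
      rw [hsup, hinf] at hIH
      -- key inequality: r A' + r (A ⊓ B) ≤ r A + r ((A ⊓ B) ⊔ span y)
      have hkey : r A' + r (A ⊓ B) ≤ r A + r ((A ⊓ B) ⊔ (K ∙ y)) := by
        by_cases hc : r ((A ⊓ B) ⊔ (K ∙ y)) = r (A ⊓ B)
        · have := aux_L1 r h2 h3 (finrank K A) (A ⊓ B) A (K ∙ y) inf_le_left hspan hc
            (by omega)
          rw [hA']; omega
        · have hb1 := h2 (A ⊓ B) (K ∙ y) hspan
          have hb2 := h2 A (K ∙ y) hspan
          rw [hA']; omega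
      omega

end Aux

theorem stmt3 {K E : Type*} [Field K] [AddCommGroup E] [Module K E] [FiniteDimensional K E]
    (r : Submodule K E → ℤ) :
    ((∀ A : Submodule K E, 0 ≤ r A ∧ r A ≤ (finrank K A : ℤ)) ∧
     (∀ A B : Submodule K E, A ≤ B → r A ≤ r B) ∧
     (∀ A B : Submodule K E, r (A ⊔ B) + r (A ⊓ B) ≤ r A + r B)) ↔
    ((r ⊥ = 0) ∧
     (∀ (A x : Submodule K E), finrank K x = 1 →
        r A ≤ r (A ⊔ x) ∧ r (A ⊔ x) ≤ r A + 1) ∧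
     (∀ (A x y : Submodule K E), finrank K x = 1 → finrank K y = 1 →
        r (A ⊔ x) = r A → r (A ⊔ y) = r A → r (A ⊔ x ⊔ y) = r A)) := by
  constructor
  · rintro ⟨h1, h2, h3⟩
    refine ⟨?_, ?_, ?_⟩
    · have := h1 ⊥
      rw [finrank_bot] at this
      omega
    · intro A x hx
      refine ⟨h2 A (A ⊔ x) le_sup_left, ?_⟩
      have hs := h3 A x
      have h0 := (h1 (A ⊓ x)).1
      have hrx := (h1 x).2
      rw [hx] at hrx
      push_cast at hrx
      omega
    · intro A x y hx hy hrx hry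
      have hs := h3 (A ⊔ x) (A ⊔ y)
      have hsup : (A ⊔ x) ⊔ (A ⊔ y) = A ⊔ x ⊔ y := by
        rw [sup_assoc, sup_comm x (A ⊔ y), sup_assoc A y x, ← sup_assoc,
          sup_idem, sup_assoc, sup_comm y x]
      rw [hsup, hrx, hry] at hs
      have hALe : A ≤ (A ⊔ x) ⊓ (A ⊔ y) := le_inf le_sup_left le_sup_left
      have hmono := h2 A ((A ⊔ x) ⊓ (A ⊔ y)) hALe
      have hmono2 := h2 A (A ⊔ x ⊔ y) (le_trans le_sup_left (le_sup_left : A ⊔ x ≤ A ⊔ x ⊔ y))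
      omega
  · rintro ⟨h1, h2, h3⟩
    have hmono := aux_mono r h2
    refine ⟨?_, ?_, ?_⟩
    · intro A
      have hb : (⊥ : Submodule K E) ≤ A := bot_le
      have := hmono (finrank K A) ⊥ A hb (by rw [finrank_bot]; omega)
      rw [h1] at this
      constructor
      · exact this.1
      · simpa using this.2
    · intro A B hAB
      exact (hmono (finrank K B) A B hAB (by omega)).1
    · intro A B
      exact aux_submod r h2 h3 (finrank K B) A B (by omega)
end

section
/- Let E be a finite-dimensional vector space over a field F and let H be a collection of subspaces of E. Then H satisfies the hyperplane axioms (H1), (H2), (H3) if and only if H satisfies (H1), (H2) and the stronger axiom (H3'): for all distinct H1, H2 ∈ H and all 1-dimensional subspaces x, y of E with x ⊄ H1, x ⊄ H2, y ⊆ H1 and y ⊄ H2, there exists H3 ∈ H such that (H1∩H2) + x ⊆ H3 and y ⊄ H3. -/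
open Module

theorem strong_of_weak_aux {K E : Type*} [Field K] [AddCommGroup E] [Module K E]
    [FiniteDimensional K E] (𝓗 : Set (Submodule K E)) (h1 : ⊤ ∉ 𝓗)
    (h2 : ∀ H1 H2 : Submodule K E, H1 ∈ 𝓗 → H2 ∈ 𝓗 → H1 ≤ H2 → H1 = H2)
    (h3 : ∀ H1 H2 : Submodule K E, H1 ∈ 𝓗 → H2 ∈ 𝓗 → H1 ≠ H2 →
        ∀ x : Submodule K E, finrank K x = 1 → ∃ H3 ∈ 𝓗, (H1 ⊓ H2) ⊔ x ≤ H3) :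
    ∀ c : ℕ, ∀ H1 H2 : Submodule K E, H1 ∈ 𝓗 → H2 ∈ 𝓗 → H1 ≠ H2 →
      finrank K E ≤ c + finrank K ↥(H1 ⊓ H2) →
      ∀ x y : Submodule K E, finrank K x = 1 → finrank K y = 1 →
        ¬ x ≤ H1 → ¬ x ≤ H2 → y ≤ H1 → ¬ y ≤ H2 →
        ∃ H3 ∈ 𝓗, (H1 ⊓ H2) ⊔ x ≤ H3 ∧ ¬ y ≤ H3 := by
  intro c
  induction c with
  | zero =>
    intro H1 H2 m1 m2 hne hc x y _ _ _ _ _ _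
    exfalso
    have hM : H1 ⊓ H2 = ⊤ := Submodule.eq_top_of_finrank_eq
      (le_antisymm (Submodule.finrank_le _) (by simpa using hc))
    have hH1 : H1 = ⊤ := eq_top_iff.mpr (by rw [← hM]; exact inf_le_left)
    rw [hH1] at m1
    exact h1 m1
  | succ c ih =>
    intro H1 H2 m1 m2 hne hc x y hxr hyr hxH1 hxH2 hyH1 hyH2
    obtain ⟨H3, m3, hle3⟩ := h3 H1 H2 m1 m2 hne x hxr
    by_cases hyH3 : y ≤ H3
    · -- the hard case: y ≤ H3
      have hM3 : H1 ⊓ H2 ≤ H3 := le_trans le_sup_left hle3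
      have hx3 : x ≤ H3 := le_trans le_sup_right hle3
      have h31 : H3 ≠ H1 := fun h => hxH1 (by rw [← h]; exact hx3)
      have h21 : ¬ H2 ≤ H1 := fun h => hne (h2 H2 H1 m2 m1 h).symm
      have h23 : ¬ H2 ≤ H3 := fun h => hxH2 (by rw [h2 H2 H3 m2 m3 h]; exact hx3)
      obtain ⟨a, haH2, haH1⟩ := SetLike.not_le_iff_exists.mp h21
      obtain ⟨b, hbH2, hbH3⟩ := SetLike.not_le_iff_exists.mp h23
      -- find v ∈ H2 with v ∉ H1 and v ∉ H3
      obtain ⟨v, hv2, hv1, hv3⟩ : ∃ v, v ∈ H2 ∧ v ∉ H1 ∧ v ∉ H3 := by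
        by_cases hA : a ∈ H3
        · by_cases hB : b ∈ H1
          · refine ⟨a + b, add_mem haH2 hbH2, fun h => haH1 ?_, fun h => hbH3 ?_⟩
            · simpa using sub_mem h hB
            · simpa using sub_mem h hA
          · exact ⟨b, hbH2, hB, hbH3⟩
        · exact ⟨a, haH2, haH1, hA⟩
      have hv0 : v ≠ 0 := fun h => hv1 (h ▸ zero_mem H1)
      set s : Submodule K E := Submodule.span K {v} with hs
      have hsr : finrank K s = 1 := finrank_span_singleton hv0
      have hsH2 : s ≤ H2 := (Submodule.span_singleton_le_iff_mem v H2).mpr hv2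
      have hsH1 : ¬ s ≤ H1 := fun h => hv1 ((Submodule.span_singleton_le_iff_mem v H1).mp h)
      have hsH3 : ¬ s ≤ H3 := fun h => hv3 ((Submodule.span_singleton_le_iff_mem v H3).mp h)
      have hMle31 : H1 ⊓ H2 ≤ H3 ⊓ H1 := le_inf hM3 inf_le_left
      have hyM : ¬ y ≤ H1 ⊓ H2 := fun h => hyH2 (h.trans inf_le_right)
      have hlt1 : H1 ⊓ H2 < H3 ⊓ H1 :=
        lt_of_le_of_ne hMle31 (fun h => hyM (by rw [h]; exact le_inf hyH3 hyH1))
      have hrank1 : finrank K E ≤ c + finrank K ↥(H3 ⊓ H1) := by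
        have := Submodule.finrank_lt_finrank_of_lt hlt1
        omega
      obtain ⟨H4, m4, hle4, hxH4⟩ :=
        ih H3 H1 m3 m1 h31 hrank1 s x hsr hxr hsH3 hsH1 hx3 hxH1
      have h314 : H3 ⊓ H1 ≤ H4 := le_trans le_sup_left hle4
      have hsH4 : s ≤ H4 := le_trans le_sup_right hle4
      have hyH4 : y ≤ H4 := (le_inf hyH3 hyH1).trans h314
      have hM4 : H1 ⊓ H2 ≤ H4 := hMle31.trans h314
      have h42 : H4 ≠ H2 := fun h => hyH2 (by rw [← h]; exact hyH4)
      have hsM : ¬ s ≤ H1 ⊓ H2 := fun h => hsH1 (h.trans inf_le_left)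
      have hlt2 : H1 ⊓ H2 < H4 ⊓ H2 :=
        lt_of_le_of_ne (le_inf hM4 inf_le_right)
          (fun h => hsM (by rw [h]; exact le_inf hsH4 hsH2))
      have hrank2 : finrank K E ≤ c + finrank K ↥(H4 ⊓ H2) := by
        have := Submodule.finrank_lt_finrank_of_lt hlt2
        omega
      obtain ⟨X, mX, hleX, hyX⟩ :=
        ih H4 H2 m4 m2 h42 hrank2 x y hxr hyr hxH4 hxH2 hyH4 hyH2
      refine ⟨X, mX, sup_le ?_ (le_trans le_sup_right hleX), hyX⟩
      exact (le_inf hM4 inf_le_right).trans (le_trans le_sup_left hleX)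
    · exact ⟨H3, m3, hle3, hyH3⟩

theorem stmt4 {K E : Type*} [Field K] [AddCommGroup E] [Module K E] [FiniteDimensional K E]
    (𝓗 : Set (Submodule K E)) :
    ((⊤ ∉ 𝓗) ∧
     (∀ H1 H2 : Submodule K E, H1 ∈ 𝓗 → H2 ∈ 𝓗 → H1 ≤ H2 → H1 = H2) ∧
     (∀ H1 H2 : Submodule K E, H1 ∈ 𝓗 → H2 ∈ 𝓗 → H1 ≠ H2 →
        ∀ x : Submodule K E, finrank K x = 1 →
          ∃ H3 ∈ 𝓗, (H1 ⊓ H2) ⊔ x ≤ H3)) ↔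
    ((⊤ ∉ 𝓗) ∧
     (∀ H1 H2 : Submodule K E, H1 ∈ 𝓗 → H2 ∈ 𝓗 → H1 ≤ H2 → H1 = H2) ∧
     (∀ H1 H2 : Submodule K E, H1 ∈ 𝓗 → H2 ∈ 𝓗 → H1 ≠ H2 →
        ∀ x y : Submodule K E, finrank K x = 1 → finrank K y = 1 →
          ¬ x ≤ H1 → ¬ x ≤ H2 → y ≤ H1 → ¬ y ≤ H2 →
          ∃ H3 ∈ 𝓗, (H1 ⊓ H2) ⊔ x ≤ H3 ∧ ¬ y ≤ H3)) := by
  constructor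
  · rintro ⟨h1, h2, h3⟩
    refine ⟨h1, h2, fun H1 H2 m1 m2 hne x y hxr hyr hxH1 hxH2 hyH1 hyH2 => ?_⟩
    exact strong_of_weak_aux 𝓗 h1 h2 h3 (finrank K E) H1 H2 m1 m2 hne
      (Nat.le_add_right _ _) x y hxr hyr hxH1 hxH2 hyH1 hyH2
  · rintro ⟨h1, h2, h3'⟩
    refine ⟨h1, h2, fun H1 H2 m1 m2 hne x hxr => ?_⟩
    by_cases hx1 : x ≤ H1
    · exact ⟨H1, m1, sup_le inf_le_left hx1⟩
    by_cases hx2 : x ≤ H2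
    · exact ⟨H2, m2, sup_le inf_le_right hx2⟩
    have h12 : ¬ H1 ≤ H2 := fun h => hne (h2 H1 H2 m1 m2 h)
    obtain ⟨a, ha1, ha2⟩ := SetLike.not_le_iff_exists.mp h12
    have ha0 : a ≠ 0 := fun h => ha2 (h ▸ zero_mem H2)
    obtain ⟨H3, m3, hle, -⟩ := h3' H1 H2 m1 m2 hne x (Submodule.span K {a}) hxr
      (finrank_span_singleton ha0) hx1 hx2
      ((Submodule.span_singleton_le_iff_mem a H1).mpr ha1)
      (fun h => ha2 ((Submodule.span_singleton_le_iff_mem a H2).mp h))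
    exact ⟨H3, m3, hle⟩
end

section
/- Let E be a finite-dimensional vector space over a field F and let cl be a closure function on E. Let I ⊆ J be subspaces of E with dim J = dim I + 1. If I is an independent space of (E,cl) and J is not an independent space of (E,cl), then cl(I) = cl(J). -/
open Module

/-- A subspace `I` is an independent space of `(E, cl)` if for every subspace
`A ⊆ I` of codimension 1 in `I` we have `cl A ≠ cl I`. -/
def IsIndepCl {K E : Type*} [Field K] [AddCommGroup E] [Module K E]
    (cl : Submodule K E → Submodule K E) (I : Submodule K E) : Prop :=
  ∀ A : Submodule K E, A ≤ I → finrank K A + 1 = finrank K I → cl A ≠ cl I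

section Aux

variable {K E : Type*} [Field K] [AddCommGroup E] [Module K E] [FiniteDimensional K E]

lemma one_dim_span {x : Submodule K E} (h : finrank K x = 1) :
    ∃ v : E, v ≠ 0 ∧ x = Submodule.span K {v} := by
  have hx : x ≠ ⊥ := by
    intro h'
    rw [h', finrank_bot] at h
    omega
  obtain ⟨v, hvx, hv0⟩ := Submodule.exists_mem_ne_zero_of_ne_bot hx
  refine ⟨v, hv0, ?_⟩
  have h1 : Submodule.span K {v} ≤ x := (Submodule.span_singleton_le_iff_mem v x).2 hvx
  have h2 : finrank K x ≤ finrank K (Submodule.span K {v}) := by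
    rw [h, finrank_span_singleton hv0]
  exact (Submodule.eq_of_le_of_finrank_le h1 h2).symm

lemma inf_one_dim_eq_bot {W y : Submodule K E} (hy1 : finrank K y = 1) (h : ¬ y ≤ W) :
    W ⊓ y = ⊥ := by
  by_contra hne
  have h1 : 1 ≤ finrank K (W ⊓ y : Submodule K E) := by
    rw [Nat.one_le_iff_ne_zero]
    intro h0
    exact hne (Submodule.finrank_eq_zero.1 h0)
  have h2 : finrank K y ≤ finrank K (W ⊓ y : Submodule K E) := by omega
  have := Submodule.eq_of_le_of_finrank_le (inf_le_right : W ⊓ y ≤ y) h2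
  exact h (this ▸ (inf_le_left : W ⊓ y ≤ W))

set_option maxHeartbeats 1000000 in
/-- Given `x ≤ A` one-dimensional, `C ≤ A` with `x ⊄ C`, there is a hyperplane
`H` of `A` containing `C`, avoiding `x`, with `H ⊔ x = A`. -/
lemma ext_hyp {A C x : Submodule K E} (hx1 : finrank K x = 1) (hxA : x ≤ A) (hCA : C ≤ A)
    (hxC : ¬ x ≤ C) :
    ∃ H : Submodule K E, C ≤ H ∧ H ≤ A ∧ ¬ x ≤ H ∧ finrank K H + 1 = finrank K A ∧
      H ⊔ x = A := by
  obtain ⟨v, hv0, rfl⟩ := one_dim_span hx1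
  have hvA : v ∈ A := hxA (Submodule.mem_span_singleton_self v)
  have hvC : v ∉ C := fun h => hxC ((Submodule.span_singleton_le_iff_mem v C).2 h)
  obtain ⟨f, hfv, hfC⟩ := Submodule.exists_dual_map_eq_bot_of_notMem hvC inferInstance
  have hfC' : ∀ c ∈ C, f c = 0 := by
    intro c hc
    have : f c ∈ C.map f := ⟨c, hc, rfl⟩
    rwa [hfC, Submodule.mem_bot] at this
  have hsup : (A ⊓ LinearMap.ker f) ⊔ Submodule.span K {v} = A := by
    apply le_antisymm (sup_le inf_le_left hxA)
    intro a ha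
    have hm : a - (f a / f v) • v ∈ A ⊓ LinearMap.ker f := by
      refine ⟨A.sub_mem ha (A.smul_mem _ hvA), ?_⟩
      simp [LinearMap.mem_ker, div_mul_cancel₀ _ hfv, map_smul, smul_eq_mul]
    have h2 : (f a / f v) • v ∈ Submodule.span K {v} :=
      Submodule.smul_mem _ _ (Submodule.mem_span_singleton_self v)
    have := Submodule.add_mem _ (Submodule.mem_sup_left hm) (Submodule.mem_sup_right h2)
    simpa using this
  have hnle : ¬ Submodule.span K {v} ≤ A ⊓ LinearMap.ker f := by
    intro h
    exact hfv (h (Submodule.mem_span_singleton_self v)).2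
  refine ⟨A ⊓ LinearMap.ker f, le_inf hCA (fun c hc => hfC' c hc), inf_le_left, hnle, ?_, hsup⟩
  have hinf := inf_one_dim_eq_bot (finrank_span_singleton hv0) hnle
  have := Submodule.finrank_sup_add_finrank_inf_eq (A ⊓ LinearMap.ker f)
    (Submodule.span K {v})
  rw [hsup, hinf, finrank_bot, finrank_span_singleton hv0] at this
  omega

set_option maxHeartbeats 1000000 in
lemma key_lemma (cl : Submodule K E → Submodule K E)
    (hCl1 : ∀ A : Submodule K E, A ≤ cl A)
    (hCl2 : ∀ A B : Submodule K E, A ≤ B → cl A ≤ cl B)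
    (hCl3 : ∀ A : Submodule K E, cl (cl A) = cl A)
    (hCl4 : ∀ (A x y : Submodule K E), finrank K x = 1 → finrank K y = 1 →
      y ≤ cl (A ⊔ x) → ¬ y ≤ cl A → x ≤ cl (A ⊔ y))
    (I J : Submodule K E) (hIJ : I ≤ J) (hI : IsIndepCl cl I) :
    ∀ n : ℕ, ∀ A : Submodule K E, finrank K I - finrank K (A ⊓ I : Submodule K E) ≤ n →
      J ≤ cl A → finrank K A = finrank K I → J ≤ cl I := by
  intro n
  induction n with
  | zero =>
    intro A hc hJA hrk
    have h1 : finrank K I ≤ finrank K (A ⊓ I : Submodule K E) := by omega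
    have h2 : A ⊓ I = I := Submodule.eq_of_le_of_finrank_le inf_le_right h1
    have hIA : I ≤ A := h2 ▸ (inf_le_left : A ⊓ I ≤ A)
    have : I = A := Submodule.eq_of_le_of_finrank_le hIA (le_of_eq hrk)
    rwa [this]
  | succ n ih =>
    intro A hc hJA hrk
    by_cases hIA : I ≤ A
    · have : I = A := Submodule.eq_of_le_of_finrank_le hIA (le_of_eq hrk)
      rwa [this]
    · obtain ⟨v, hvI, hvA⟩ := SetLike.not_le_iff_exists.1 hIA
      have hv0 : v ≠ 0 := fun h => hvA (h ▸ A.zero_mem)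
      set y : Submodule K E := Submodule.span K {v} with hy
      have hy1 : finrank K y = 1 := finrank_span_singleton hv0
      have hyI : y ≤ I := (Submodule.span_singleton_le_iff_mem v I).2 hvI
      have hyA : ¬ y ≤ A := fun h => hvA (h (Submodule.mem_span_singleton_self v))
      set B : Submodule K E := A ⊓ I with hB
      have hBA : B ≤ A := inf_le_left
      have hBI : B ≤ I := inf_le_right
      have hyB : ¬ y ≤ B := fun h => hyA (h.trans hBA)
      have hyclA : y ≤ cl A := hyI.trans (hIJ.trans hJA)
      -- y is not in cl B, by independence of I
      have hyclB : ¬ y ≤ cl B := by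
        intro hyc
        obtain ⟨H, hBH, hHI, hyH, hHrk, hHsup⟩ := ext_hyp hy1 hyI hBI hyB
        have hclHI : cl H = cl I := by
          apply le_antisymm (hCl2 _ _ hHI)
          have h1 : H ⊔ y ≤ cl H := sup_le (hCl1 H) (hyc.trans (hCl2 _ _ hBH))
          have h2 : cl (H ⊔ y) ≤ cl H := (hCl2 _ _ h1).trans (le_of_eq (hCl3 H))
          rw [hHsup] at h2
          exact h2
        exact hI H hHI hHrk hclHI
      -- find a minimal C between B and A with y ≤ cl C
      classical
      have hPex : ∃ m : ℕ, ∃ C : Submodule K E,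
          B ≤ C ∧ C ≤ A ∧ y ≤ cl C ∧ finrank K C = m :=
        ⟨finrank K A, A, hBA, le_rfl, hyclA, rfl⟩
      obtain ⟨C, hBC, hCA, hyclC, hCrk⟩ := Nat.find_spec hPex
      have hmin : ∀ C' : Submodule K E, B ≤ C' → C' ≤ A → finrank K C' < finrank K C →
          ¬ y ≤ cl C' := by
        intro C' h1 h2 h3 h4
        exact Nat.find_min hPex (hCrk ▸ h3) ⟨C', h1, h2, h4, rfl⟩
      have hBneC : ¬ C ≤ B := by
        intro h
        exact hyclB (hyclC.trans (hCl2 _ _ h))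
      obtain ⟨v', hv'C, hv'B⟩ := SetLike.not_le_iff_exists.1 hBneC
      have hv'0 : v' ≠ 0 := fun h => hv'B (h ▸ B.zero_mem)
      set x' : Submodule K E := Submodule.span K {v'} with hx'
      have hx'1 : finrank K x' = 1 := finrank_span_singleton hv'0
      have hx'C : x' ≤ C := (Submodule.span_singleton_le_iff_mem v' C).2 hv'C
      have hx'B : ¬ x' ≤ B := fun h => hv'B (h (Submodule.mem_span_singleton_self v'))
      obtain ⟨C', hBC', hC'C, hx'C', hC'rk, hC'sup⟩ := ext_hyp hx'1 hx'C hBC hx'B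
      have hyclC' : ¬ y ≤ cl C' := hmin C' hBC' (hC'C.trans hCA) (by omega)
      have hx'cl : x' ≤ cl (C' ⊔ y) := by
        apply hCl4 C' x' y hx'1 hy1 _ hyclC'
        rw [hC'sup]
        exact hyclC
      obtain ⟨A', hC'A', hA'A, hx'A', hA'rk, hA'sup⟩ :=
        ext_hyp hx'1 (hx'C.trans hCA) (hC'C.trans hCA) hx'C'
      set A'' : Submodule K E := A' ⊔ y with hA''
      have hyA' : ¬ y ≤ A' := fun h => hyA (h.trans hA'A)
      -- J ≤ cl A''
      have hAclA'' : A ≤ cl A'' := by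
        rw [← hA'sup]
        apply sup_le ((le_sup_left : A' ≤ A'').trans (hCl1 A''))
        refine hx'cl.trans (hCl2 _ _ (sup_le (hC'A'.trans le_sup_left) le_sup_right))
      have hJclA'' : J ≤ cl A'' := hJA.trans ((hCl2 _ _ hAclA'').trans (le_of_eq (hCl3 A'')))
      -- rank of A''
      have hrk'' : finrank K A'' = finrank K I := by
        have hinf := inf_one_dim_eq_bot hy1 hyA'
        have := Submodule.finrank_sup_add_finrank_inf_eq A' y
        rw [hinf, finrank_bot, hy1] at this
        rw [hA'']
        omega
      -- counting
      have hsub : B ⊔ y ≤ A'' ⊓ I := by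
        apply le_inf (sup_le ((hBC'.trans hC'A').trans le_sup_left) le_sup_right)
          (sup_le hBI hyI)
      have hBy : finrank K (B ⊔ y : Submodule K E) = finrank K B + 1 := by
        have hinf := inf_one_dim_eq_bot hy1 hyB
        have := Submodule.finrank_sup_add_finrank_inf_eq B y
        rw [hinf, finrank_bot, hy1] at this
        omega
      have hmono : finrank K (B ⊔ y : Submodule K E) ≤ finrank K (A'' ⊓ I : Submodule K E) :=
        Submodule.finrank_mono hsub
      exact ih A'' (by omega) hJclA'' hrk''

end Aux

theorem stmt5 {K E : Type*} [Field K] [AddCommGroup E] [Module K E] [FiniteDimensional K E]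
    (cl : Submodule K E → Submodule K E)
    (hCl1 : ∀ A : Submodule K E, A ≤ cl A)
    (hCl2 : ∀ A B : Submodule K E, A ≤ B → cl A ≤ cl B)
    (hCl3 : ∀ A : Submodule K E, cl (cl A) = cl A)
    (hCl4 : ∀ (A x y : Submodule K E), finrank K x = 1 → finrank K y = 1 →
      y ≤ cl (A ⊔ x) → ¬ y ≤ cl A → x ≤ cl (A ⊔ y))
    (I J : Submodule K E) (hIJ : I ≤ J) (hdim : finrank K J = finrank K I + 1)
    (hI : IsIndepCl cl I) (hJ : ¬ IsIndepCl cl J) :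
    cl I = cl J := by
  simp only [IsIndepCl, not_forall, not_not] at hJ
  obtain ⟨A, hAJ, hArk, hclA⟩ := hJ
  have hrkA : finrank K A = finrank K I := by omega
  have hJclA : J ≤ cl A := hclA ▸ hCl1 J
  have hJclI : J ≤ cl I :=
    key_lemma cl hCl1 hCl2 hCl3 hCl4 I J hIJ hI (finrank K I) A (Nat.sub_le _ _) hJclA hrkA
  exact le_antisymm (hCl2 _ _ hIJ) ((hCl2 _ _ hJclI).trans (le_of_eq (hCl3 I)))
end

section
/- Let E be a finite-dimensional vector space over a field F and let cl be a closure function on E. Then the collection I_cl of independent spaces of (E,cl) satisfies the independence axioms (I1), (I2), (I3), (I4). -/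
open Module

section Aux
set_option linter.unusedSectionVars false
variable {K E : Type*} [Field K] [AddCommGroup E] [Module K E] [FiniteDimensional K E]

/-- A point of `I` outside `P`, as a line. -/
lemma exists_line_not_le {I P : Submodule K E} (h : ¬ I ≤ P) :
    ∃ x : Submodule K E, finrank K x = 1 ∧ x ≤ I ∧ ¬ x ≤ P := by
  obtain ⟨v, hvI, hvP⟩ := SetLike.not_le_iff_exists.mp h
  refine ⟨Submodule.span K {v}, finrank_span_singleton (fun h0 => hvP (h0 ▸ P.zero_mem)), ?_, ?_⟩
  · exact Submodule.span_le.mpr (Set.singleton_subset_iff.mpr hvI)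
  · exact fun hle => hvP (hle (Submodule.mem_span_singleton_self v))

lemma finrank_sup_line {A x : Submodule K E} (hx : finrank K x = 1) (hxA : ¬ x ≤ A) :
    finrank K ↥(A ⊔ x) = finrank K A + 1 := by
  have key := Submodule.finrank_sup_add_finrank_inf_eq A x
  have hinf : finrank K ↥(A ⊓ x) = 0 := by
    by_contra h0
    have h1 : finrank K x ≤ finrank K ↥(A ⊓ x) := by
      have := Submodule.finrank_mono (inf_le_right : A ⊓ x ≤ x)
      omega
    have := Submodule.eq_of_le_of_finrank_le (inf_le_right : A ⊓ x ≤ x) h1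
    exact hxA (this ▸ (inf_le_left : A ⊓ x ≤ A))
  omega

lemma exists_step {A B : Submodule K E} (hle : A ≤ B) (hlt : finrank K A < finrank K B) :
    ∃ C : Submodule K E, A ≤ C ∧ C ≤ B ∧ finrank K C = finrank K A + 1 := by
  have hne : ¬ B ≤ A := fun h => absurd (Submodule.finrank_mono h) (by omega)
  obtain ⟨x, hx1, hxB, hxA⟩ := exists_line_not_le hne
  exact ⟨A ⊔ x, le_sup_left, sup_le hle hxB, finrank_sup_line hx1 hxA⟩

lemma exists_hyperplane_between {A B : Submodule K E} (hle : A ≤ B)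
    (hlt : finrank K A < finrank K B) :
    ∃ H : Submodule K E, A ≤ H ∧ H ≤ B ∧ finrank K H + 1 = finrank K B := by
  obtain ⟨n, hn⟩ : ∃ n, finrank K B - finrank K A = n + 1 := ⟨_, (Nat.succ_pred_eq_of_pos (by omega)).symm⟩
  induction n generalizing A with
  | zero => exact ⟨A, le_rfl, hle, by omega⟩
  | succ n ih =>
    obtain ⟨C, hAC, hCB, hC⟩ := exists_step hle hlt
    obtain ⟨H, hCH, hHB, hH⟩ := ih hCB (by omega) (by omega)
    exact ⟨H, hAC.trans hCH, hHB, hH⟩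

lemma exists_compl_le {H I : Submodule K E} (hle : H ≤ I) :
    ∃ W : Submodule K E, W ≤ I ∧ H ⊔ W = I ∧ finrank K H + finrank K W ≤ finrank K I := by
  obtain ⟨n, hn⟩ : ∃ n, finrank K I - finrank K H = n := ⟨_, rfl⟩
  induction n generalizing H with
  | zero =>
    have : H = I := Submodule.eq_of_le_of_finrank_le hle
      (by have := Submodule.finrank_mono hle; omega)
    refine ⟨⊥, bot_le, by simp [this], ?_⟩
    rw [this]; simp
  | succ n ih =>
    have hlt : finrank K H < finrank K I := by
      have := Submodule.finrank_mono hle; omega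
    have hne : ¬ I ≤ H := fun h => absurd (Submodule.finrank_mono h) (by omega)
    obtain ⟨x, hx1, hxI, hxH⟩ := exists_line_not_le hne
    obtain ⟨W, hWI, hsup, hfr⟩ := ih (sup_le hle hxI) (by rw [finrank_sup_line hx1 hxH]; omega)
    refine ⟨x ⊔ W, sup_le hxI hWI, by rw [← sup_assoc]; exact hsup, ?_⟩
    have h1 : finrank K ↥(x ⊔ W) ≤ finrank K x + finrank K W := by
      have := Submodule.finrank_sup_add_finrank_inf_eq x W; omega
    have h2 : finrank K ↥(H ⊔ x) = finrank K H + 1 := finrank_sup_line hx1 hxH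
    omega

variable (cl : Submodule K E → Submodule K E)
  (hCl1 : ∀ A : Submodule K E, A ≤ cl A)
  (hCl2 : ∀ A B : Submodule K E, A ≤ B → cl A ≤ cl B)
  (hCl3 : ∀ A : Submodule K E, cl (cl A) = cl A)

include hCl1 hCl2 hCl3

lemma cl_le_cl_of_le_cl {A B : Submodule K E} (h : A ≤ cl B) : cl A ≤ cl B := by
  have := hCl2 A (cl B) h; rwa [hCl3] at this

/-- L1 : an independent space is not contained in the closure of a proper subspace. -/
lemma indep_not_le_cl {I A : Submodule K E} (hI : IsIndepCl cl I) (hle : A ≤ I)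
    (hlt : finrank K A < finrank K I) : ¬ I ≤ cl A := by
  intro hIA
  obtain ⟨H, hAH, hHI, hH⟩ := exists_hyperplane_between hle hlt
  refine hI H hHI hH (le_antisymm (hCl2 _ _ hHI) ?_)
  exact cl_le_cl_of_le_cl cl hCl1 hCl2 hCl3 (hIA.trans (hCl2 _ _ hAH))

/-- Claim A : adding a line outside the closure preserves independence. -/
lemma indep_sup_line {I x : Submodule K E} (hI : IsIndepCl cl I) (hx1 : finrank K x = 1)
    (hx : ¬ x ≤ cl I)
    (hCl4 : ∀ (A x y : Submodule K E), finrank K x = 1 → finrank K y = 1 →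
      y ≤ cl (A ⊔ x) → ¬ y ≤ cl A → x ≤ cl (A ⊔ y)) :
    IsIndepCl cl (I ⊔ x) := by
  have hxI : ¬ x ≤ I := fun h => hx (h.trans (hCl1 I))
  have hfr : finrank K ↥(I ⊔ x) = finrank K I + 1 := finrank_sup_line hx1 hxI
  intro A hA hAfr hclA
  have hfrA : finrank K A = finrank K I := by omega
  have hxle : x ≤ cl A := by
    rw [hclA]; exact le_sup_right.trans (hCl1 _)
  by_cases hAI : A ≤ I
  · have : A = I := Submodule.eq_of_le_of_finrank_le hAI (by omega)
    exact hx (by rwa [this] at hxle)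
  · have hsupAI : A ⊔ I = I ⊔ x := by
      refine Submodule.eq_of_le_of_finrank_le (sup_le hA le_sup_left) ?_
      have h1 : finrank K I < finrank K ↥(A ⊔ I) :=
        Submodule.finrank_lt_finrank_of_lt (lt_of_le_of_ne le_sup_right
          (fun h => hAI (le_sup_left.trans_eq h.symm)))
      omega
    have hfrB : finrank K ↥(A ⊓ I) + 1 = finrank K I := by
      have := Submodule.finrank_sup_add_finrank_inf_eq A I
      rw [hsupAI] at this; omega
    have hBI : A ⊓ I ≤ I := inf_le_right
    have hBA : A ⊓ I ≤ A := inf_le_left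
    -- z : line in A outside A ⊓ I
    have hnAB : ¬ A ≤ A ⊓ I := fun h =>
      absurd (Submodule.finrank_mono h) (by omega)
    obtain ⟨z, hz1, hzA, hzB⟩ := exists_line_not_le hnAB
    have hBz : A ⊓ I ⊔ z = A := Submodule.eq_of_le_of_finrank_le (sup_le hBA hzA)
      (by rw [finrank_sup_line hz1 hzB]; omega)
    -- y : line in I outside cl (A ⊓ I)
    have hIclB : ¬ I ≤ cl (A ⊓ I) := indep_not_le_cl cl hCl1 hCl2 hCl3 hI hBI (by omega)
    obtain ⟨y, hy1, hyI, hyB⟩ := exists_line_not_le hIclB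
    have hyclA : y ≤ cl (A ⊓ I ⊔ z) := by
      rw [hBz, hclA]; exact hyI.trans (le_sup_left.trans (hCl1 _))
    have hzcl : z ≤ cl (A ⊓ I ⊔ y) := hCl4 (A ⊓ I) z y hz1 hy1 hyclA hyB
    have hByI : A ⊓ I ⊔ y = I := by
      refine Submodule.eq_of_le_of_finrank_le (sup_le hBI hyI) ?_
      rw [finrank_sup_line hy1 (fun h => hyB (h.trans (hCl1 _)))]; omega
    rw [hByI] at hzcl
    have hAclI : A ≤ cl I := by
      rw [← hBz]; exact sup_le (hBI.trans (hCl1 I)) hzcl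
    exact hx (hxle.trans (cl_le_cl_of_le_cl cl hCl1 hCl2 hCl3 hAclI))

/-- Every subspace contains an independent subspace with the same closure. -/
lemma exists_indep_cl_eq (I : Submodule K E) :
    ∃ I' : Submodule K E, I' ≤ I ∧ cl I' = cl I ∧ IsIndepCl cl I' ∧
      finrank K I' ≤ finrank K I := by
  obtain ⟨n, hn⟩ : ∃ n, finrank K I = n := ⟨_, rfl⟩
  induction n using Nat.strong_induction_on generalizing I with
  | _ n ih =>
    by_cases hI : IsIndepCl cl I
    · exact ⟨I, le_rfl, rfl, hI, le_rfl⟩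
    · simp only [IsIndepCl, not_forall] at hI
      obtain ⟨A, hA, hAfr, hclA⟩ := hI
      obtain ⟨I', h1, h2, h3, h4⟩ := ih (finrank K A) (by omega) A rfl
      exact ⟨I', h1.trans hA, by rw [h2, not_not.mp hclA], h3, by omega⟩

/-- L5 : an independent space inside the closure of an independent space has
dimension at most that of the latter. -/
lemma indep_le_cl_dim_le
    (hCl4 : ∀ (A x y : Submodule K E), finrank K x = 1 → finrank K y = 1 →
      y ≤ cl (A ⊔ x) → ¬ y ≤ cl A → x ≤ cl (A ⊔ y))
    {I J : Submodule K E} (hI : IsIndepCl cl I) (hJ : IsIndepCl cl J)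
    (hle : J ≤ cl I) : finrank K J ≤ finrank K I := by
  set N := finrank K E with hN
  obtain ⟨n, hn⟩ : ∃ n, (N + 1) * finrank K I + (N - finrank K ↥(I ⊓ J)) = n := ⟨_, rfl⟩
  induction n using Nat.strong_induction_on generalizing I J with
  | _ n ih =>
  by_cases hJI : J ≤ I
  · exact Submodule.finrank_mono hJI
  · set A := I ⊓ J with hA
    have hAJ : A ≤ J := inf_le_right
    have hAI : A ≤ I := inf_le_left
    have hAltJ : finrank K ↥A < finrank K J :=
      Submodule.finrank_lt_finrank_of_lt (lt_of_le_of_ne hAJ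
        (fun h => hJI (by rw [← h]; exact hAI)))
    have hnJA : ¬ J ≤ cl A := indep_not_le_cl cl hCl1 hCl2 hCl3 hJ hAJ hAltJ
    obtain ⟨y, hy1, hyJ, hyA⟩ := exists_line_not_le hnJA
    -- minimal H with A ≤ H ≤ I and y ≤ cl H
    have hSne : ∃ m, ∃ H : Submodule K E, A ≤ H ∧ H ≤ I ∧ y ≤ cl H ∧ finrank K H = m :=
      ⟨finrank K I, I, hAI, le_rfl, hyJ.trans hle, rfl⟩
    classical
    obtain ⟨H, hAH, hHI, hyH, hHfr⟩ := Nat.find_spec hSne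
    have hmin : ∀ H' : Submodule K E, A ≤ H' → H' ≤ I → finrank K H' < Nat.find hSne →
        ¬ y ≤ cl H' := by
      intro H' h1 h2 h3 h4
      exact Nat.find_min hSne h3 ⟨H', h1, h2, h4, rfl⟩
    have hAneH : finrank K ↥A < finrank K H := by
      rcases lt_or_eq_of_le (Submodule.finrank_mono hAH) with h | h
      · exact h
      · exact absurd (Submodule.eq_of_le_of_finrank_le hAH h.ge ▸ hyH) hyA
    obtain ⟨H', hAH', hH'H, hH'fr⟩ := exists_hyperplane_between hAH hAneH
    have hyH' : ¬ y ≤ cl H' := hmin H' hAH' (hH'H.trans hHI) (by omega)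
    have hnHH' : ¬ H ≤ H' := fun h =>
      absurd (Submodule.finrank_mono h) (by omega)
    obtain ⟨z, hz1, hzH, hzH'⟩ := exists_line_not_le hnHH'
    have hH'z : H' ⊔ z = H := Submodule.eq_of_le_of_finrank_le (sup_le hH'H hzH)
      (by rw [finrank_sup_line hz1 hzH']; omega)
    have hzcl : z ≤ cl (H' ⊔ y) := hCl4 H' z y hz1 hy1 (hH'z ▸ hyH) hyH'
    obtain ⟨W, hWI, hHW, hWfr⟩ := exists_compl_le hHI
    set I₀ := H' ⊔ y ⊔ W with hI₀
    have hfrI₀ : finrank K ↥I₀ ≤ finrank K I := by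
      have h1 : finrank K ↥I₀ ≤ finrank K ↥(H' ⊔ y) + finrank K W := by
        have := Submodule.finrank_sup_add_finrank_inf_eq (H' ⊔ y) W
        rw [← hI₀] at this; omega
      have h2 : finrank K ↥(H' ⊔ y) ≤ finrank K H' + finrank K y := by
        have := Submodule.finrank_sup_add_finrank_inf_eq H' y; omega
      omega
    have hIclI₀ : I ≤ cl I₀ := by
      rw [← hHW, ← hH'z]
      refine sup_le (sup_le ?_ ?_) ?_
      · exact (le_sup_left.trans le_sup_left : H' ≤ I₀).trans (hCl1 _)
      · exact hzcl.trans (cl_le_cl_of_le_cl cl hCl1 hCl2 hCl3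
          ((le_sup_left : H' ⊔ y ≤ I₀).trans (hCl1 _)))
      · exact (le_sup_right : W ≤ I₀).trans (hCl1 _)
    have hJclI₀ : J ≤ cl I₀ :=
      hle.trans (cl_le_cl_of_le_cl cl hCl1 hCl2 hCl3 hIclI₀)
    have hAyI₀ : A ⊔ y ≤ I₀ ⊓ J :=
      le_inf (sup_le (hAH'.trans (le_sup_left.trans le_sup_left)) (le_sup_right.trans le_sup_left))
        (sup_le hAJ hyJ)
    have hfrAy : finrank K ↥(A ⊔ y) = finrank K ↥A + 1 :=
      finrank_sup_line hy1 (fun h => hyA (h.trans (hCl1 A)))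
    obtain ⟨I₁, hI₁le, hI₁cl, hI₁indep, hI₁fr⟩ := exists_indep_cl_eq cl hCl1 hCl2 hCl3 I₀
    have hJclI₁ : J ≤ cl I₁ := by rw [hI₁cl]; exact hJclI₀
    have hboundI : finrank K ↥(I ⊓ J) ≤ N := Submodule.finrank_le _
    have hboundI₀ : finrank K ↥(I₀ ⊓ J) ≤ N := Submodule.finrank_le _
    have hAle : finrank K ↥(I ⊓ J) = finrank K ↥A := rfl
    rcases lt_or_eq_of_le (le_trans hI₁fr hfrI₀) with hcase | hcase
    · -- strictly smaller I₁
      have := ih ((N + 1) * finrank K I₁ + (N - finrank K ↥(I₁ ⊓ J)))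
        (by
          have h1 : N - finrank K ↥(I₁ ⊓ J) ≤ N := Nat.sub_le _ _
          have h2 : (N+1) * finrank K I₁ + (N+1) ≤ (N+1) * finrank K I := by
            have : finrank K I₁ + 1 ≤ finrank K I := by omega
            calc (N+1) * finrank K I₁ + (N+1) = (N+1) * (finrank K I₁ + 1) := by ring
              _ ≤ (N+1) * finrank K I := Nat.mul_le_mul_left _ this
          omega)
        hI₁indep hJ hJclI₁ rfl
      omega
    · -- equal dimensions : I₁ = I₀ and overlap grows
      have hI₁eq : I₁ = I₀ := Submodule.eq_of_le_of_finrank_le hI₁le (by omega)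
      have hover : finrank K ↥(I ⊓ J) < finrank K ↥(I₀ ⊓ J) := by
        have := Submodule.finrank_mono hAyI₀
        omega
      have hI₀indep : IsIndepCl cl I₀ := hI₁eq ▸ hI₁indep
      have := ih ((N + 1) * finrank K I₀ + (N - finrank K ↥(I₀ ⊓ J)))
        (by
          have heq : finrank K ↥I₀ = finrank K I := by omega
          rw [heq]
          omega)
        hI₀indep hJ hJclI₀ rfl
      omega

/-- A maximal independent subspace of X has X inside its closure. -/
lemma le_cl_of_max
    (hCl4 : ∀ (A x y : Submodule K E), finrank K x = 1 → finrank K y = 1 →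
      y ≤ cl (A ⊔ x) → ¬ y ≤ cl A → x ≤ cl (A ⊔ y))
    {X I : Submodule K E} (hI : IsIndepCl cl I) (hIX : I ≤ X)
    (hmax : ∀ L : Submodule K E, IsIndepCl cl L → L ≤ X → finrank K L ≤ finrank K I) :
    X ≤ cl I := by
  intro v hv
  by_cases hv0 : v = 0
  · simp [hv0]
  by_contra hvcl
  set x := Submodule.span K {v} with hx
  have hx1 : finrank K x = 1 := finrank_span_singleton hv0
  have hxX : x ≤ X := Submodule.span_le.mpr (Set.singleton_subset_iff.mpr hv)
  have hxcl : ¬ x ≤ cl I := fun h => hvcl (h (Submodule.mem_span_singleton_self v))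
  have hind : IsIndepCl cl (I ⊔ x) := indep_sup_line cl hCl1 hCl2 hCl3 hI hx1 hxcl hCl4
  have := hmax (I ⊔ x) hind (sup_le hIX hxX)
  rw [finrank_sup_line hx1 (fun h => hxcl (h.trans (hCl1 I)))] at this
  omega

end Aux


theorem stmt6 {K E : Type*} [Field K] [AddCommGroup E] [Module K E] [FiniteDimensional K E]
    (cl : Submodule K E → Submodule K E)
    (hCl1 : ∀ A : Submodule K E, A ≤ cl A)
    (hCl2 : ∀ A B : Submodule K E, A ≤ B → cl A ≤ cl B)
    (hCl3 : ∀ A : Submodule K E, cl (cl A) = cl A)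
    (hCl4 : ∀ (A x y : Submodule K E), finrank K x = 1 → finrank K y = 1 →
      y ≤ cl (A ⊔ x) → ¬ y ≤ cl A → x ≤ cl (A ⊔ y)) :
    ({I : Submodule K E | IsIndepCl cl I}.Nonempty) ∧
    (∀ I J : Submodule K E, IsIndepCl cl J → I ≤ J → IsIndepCl cl I) ∧
    (∀ I J : Submodule K E, IsIndepCl cl I → IsIndepCl cl J →
      finrank K I < finrank K J →
      ∃ x : Submodule K E, finrank K x = 1 ∧ x ≤ J ∧ ¬ x ≤ I ∧ IsIndepCl cl (I ⊔ x)) ∧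
    (∀ A B I J : Submodule K E,
      I ∈ maxIn A {I : Submodule K E | IsIndepCl cl I} →
      J ∈ maxIn B {I : Submodule K E | IsIndepCl cl I} →
      ∃ K' ∈ maxIn (A ⊔ B) {I : Submodule K E | IsIndepCl cl I}, K' ≤ I ⊔ J) := by
  have hbot : IsIndepCl cl ⊥ := by
    intro A hA hfr
    have h0 : finrank K (⊥ : Submodule K E) = 0 := finrank_bot K E
    omega
  refine ⟨⟨⊥, hbot⟩, ?_, ?_, ?_⟩
  · -- (I2)
    intro I J hJ hIJ A hA hfr hclA
    obtain ⟨W, hWJ, hsup, hWfr⟩ := exists_compl_le hIJ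
    have hSJ : A ⊔ W ≤ J := sup_le (hA.trans hIJ) hWJ
    have hSfr : finrank K ↥(A ⊔ W) < finrank K J := by
      have h1 : finrank K ↥(A ⊔ W) ≤ finrank K A + finrank K W := by
        have := Submodule.finrank_sup_add_finrank_inf_eq A W; omega
      omega
    have hJcl : J ≤ cl (A ⊔ W) := by
      rw [← hsup]
      refine sup_le ?_ (le_sup_right.trans (hCl1 _))
      calc I ≤ cl I := hCl1 I
        _ = cl A := hclA.symm
        _ ≤ cl (A ⊔ W) := hCl2 _ _ le_sup_left
    exact indep_not_le_cl cl hCl1 hCl2 hCl3 hJ hSJ hSfr hJcl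
  · -- (I3)
    intro I J hI hJ hlt
    by_cases hJcl : J ≤ cl I
    · exact absurd (indep_le_cl_dim_le cl hCl1 hCl2 hCl3 hCl4 hI hJ hJcl) (by omega)
    · obtain ⟨x, hx1, hxJ, hxcl⟩ := exists_line_not_le hJcl
      exact ⟨x, hx1, hxJ, fun h => hxcl (h.trans (hCl1 I)),
        indep_sup_line cl hCl1 hCl2 hCl3 hI hx1 hxcl hCl4⟩
  · -- (I4)
    intro A B I J hI hJ
    obtain ⟨hIind, hIA, hImax⟩ := hI
    obtain ⟨hJind, hJB, hJmax⟩ := hJ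
    have hAcl : A ≤ cl I :=
      le_cl_of_max cl hCl1 hCl2 hCl3 hCl4 hIind hIA (fun L hL hLA => hImax L hL hLA)
    have hBcl : B ≤ cl J :=
      le_cl_of_max cl hCl1 hCl2 hCl3 hCl4 hJind hJB (fun L hL hLB => hJmax L hL hLB)
    -- pick a maximal independent subspace of I ⊔ J
    set S : Set ℕ := {n | ∃ L : Submodule K E, IsIndepCl cl L ∧ L ≤ I ⊔ J ∧ finrank K L = n}
      with hS
    have hSne : S.Nonempty := ⟨finrank K (⊥ : Submodule K E), ⊥, hbot, bot_le, rfl⟩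
    have hSbdd : BddAbove S := ⟨finrank K E, fun n ⟨L, _, _, hL⟩ => hL ▸ Submodule.finrank_le L⟩
    obtain ⟨K', hK'ind, hK'le, hK'fr⟩ := Nat.sSup_mem hSne hSbdd
    have hK'max : ∀ L : Submodule K E, IsIndepCl cl L → L ≤ I ⊔ J →
        finrank K L ≤ finrank K K' := by
      intro L hL hLle
      rw [hK'fr]
      exact le_csSup hSbdd ⟨L, hL, hLle, rfl⟩
    have hIJcl : I ⊔ J ≤ cl K' :=
      le_cl_of_max cl hCl1 hCl2 hCl3 hCl4 hK'ind hK'le hK'max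
    have hABcl : A ⊔ B ≤ cl K' := by
      refine sup_le (hAcl.trans ?_) (hBcl.trans ?_) <;>
        refine (hCl2 _ _ ?_).trans (cl_le_cl_of_le_cl cl hCl1 hCl2 hCl3 hIJcl)
      · exact le_sup_left
      · exact le_sup_right
    refine ⟨K', ⟨hK'ind, hK'le.trans (sup_le (hIA.trans le_sup_left)
      (hJB.trans le_sup_right)), ?_⟩, hK'le⟩
    intro L hL hLle
    exact indep_le_cl_dim_le cl hCl1 hCl2 hCl3 hCl4 hK'ind hL (hLle.trans hABcl)
end

section
/- Let E be a finite-dimensional vector space over a field F and let cl be a closure function on E. Then the collection F_cl := { F ∈ L(E) : cl(F) = F } satisfies the flat axioms (F1), (F2), (F3). -/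
open Module

/-- `B` covers `A` in the collection `𝓐`: both belong to `𝓐`, `A ⊆ B`, and any
member of `𝓐` between them equals `A` or `B`. -/
def CoversIn {K E : Type*} [Field K] [AddCommGroup E] [Module K E]
    (𝓐 : Set (Submodule K E)) (A B : Submodule K E) : Prop :=
  A ∈ 𝓐 ∧ B ∈ 𝓐 ∧ A ≤ B ∧ ∀ C ∈ 𝓐, A ≤ C → C ≤ B → C = A ∨ C = B

theorem stmt9 {K E : Type*} [Field K] [AddCommGroup E] [Module K E] [FiniteDimensional K E]
    (cl : Submodule K E → Submodule K E)
    (hCl1 : ∀ A : Submodule K E, A ≤ cl A)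
    (hCl2 : ∀ A B : Submodule K E, A ≤ B → cl A ≤ cl B)
    (hCl3 : ∀ A : Submodule K E, cl (cl A) = cl A)
    (hCl4 : ∀ (A x y : Submodule K E), finrank K x = 1 → finrank K y = 1 →
      y ≤ cl (A ⊔ x) → ¬ y ≤ cl A → x ≤ cl (A ⊔ y)) :
    ((⊤ : Submodule K E) ∈ {G : Submodule K E | cl G = G}) ∧
    (∀ F1 F2 : Submodule K E, F1 ∈ {G : Submodule K E | cl G = G} →
      F2 ∈ {G : Submodule K E | cl G = G} → F1 ⊓ F2 ∈ {G : Submodule K E | cl G = G}) ∧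
    (∀ Fl ∈ {G : Submodule K E | cl G = G}, ∀ x : Submodule K E,
      finrank K x = 1 → ¬ x ≤ Fl →
      ∃! G : Submodule K E, CoversIn {G : Submodule K E | cl G = G} Fl G ∧ x ≤ G) := by
  refine ⟨le_antisymm le_top (hCl1 ⊤), ?_, ?_⟩
  · intro F1 F2 h1 h2
    simp only [Set.mem_setOf_eq] at *
    refine le_antisymm (le_inf ?_ ?_) (hCl1 _)
    · exact le_trans (hCl2 _ _ inf_le_left) (le_of_eq h1)
    · exact le_trans (hCl2 _ _ inf_le_right) (le_of_eq h2)
  · intro Fl hFl x hx hxFl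
    simp only [Set.mem_setOf_eq] at hFl
    set G := cl (Fl ⊔ x) with hGdef
    have hGclosed : cl G = G := hCl3 _
    have hFlG : Fl ≤ G := le_trans le_sup_left (hCl1 _)
    have hxG : x ≤ G := le_trans le_sup_right (hCl1 _)
    -- key: any closed C with Fl ≤ C ≤ G and C ≠ Fl contains x, hence equals G
    have key : ∀ C : Submodule K E, cl C = C → Fl ≤ C → C ≤ G → C ≠ Fl → G ≤ C := by
      intro C hC hFlC hCG hne
      obtain ⟨v, hvC, hvFl⟩ : ∃ v ∈ C, v ∉ Fl := by
        by_contra h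
        push_neg at h
        exact hne (le_antisymm h hFlC)
      have hv0 : v ≠ 0 := fun h => hvFl (h ▸ Fl.zero_mem)
      set y : Submodule K E := Submodule.span K {v} with hy
      have hy1 : finrank K y = 1 := finrank_span_singleton hv0
      have hyC : y ≤ C := (Submodule.span_singleton_le_iff_mem v C).2 hvC
      have hynFl : ¬ y ≤ cl Fl := by
        rw [hFl]
        intro h
        exact hvFl (h (Submodule.mem_span_singleton_self v))
      have hyG : y ≤ cl (Fl ⊔ x) := le_trans hyC hCG
      have hxCy : x ≤ cl (Fl ⊔ y) := hCl4 Fl x y hx hy1 hyG hynFl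
      have : cl (Fl ⊔ y) ≤ C := by
        have : Fl ⊔ y ≤ C := sup_le hFlC hyC
        calc cl (Fl ⊔ y) ≤ cl C := hCl2 _ _ this
        _ = C := hC
      have hxC : x ≤ C := le_trans hxCy this
      calc G = cl (Fl ⊔ x) := rfl
      _ ≤ cl C := hCl2 _ _ (sup_le hFlC hxC)
      _ = C := hC
    have hGne : G ≠ Fl := by
      intro h
      exact hxFl (h ▸ hxG)
    refine ⟨G, ⟨⟨hFl, hGclosed, hFlG, ?_⟩, hxG⟩, ?_⟩
    · intro C hC hFlC hCG
      by_cases hne : C = Fl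
      · exact Or.inl hne
      · exact Or.inr (le_antisymm hCG (key C hC hFlC hCG hne))
    · rintro G' ⟨⟨_, hG'closed, hFlG', hcov⟩, hxG'⟩
      have hGG' : G ≤ G' := by
        calc G = cl (Fl ⊔ x) := rfl
        _ ≤ cl G' := hCl2 _ _ (sup_le hFlG' hxG')
        _ = G' := hG'closed
      rcases hcov G hGclosed hFlG hGG' with h | h
      · exact absurd h hGne
      · exact h.symm
end

section
/- Let E be a finite-dimensional vector space over a field F and let F be a collection of subspaces of E satisfying the flat axioms (F1), (F2), (F3). Then the map cl_F : L(E) → L(E), sending a subspace A to the intersection of all members of F containing A, is a closure function, i.e. it satisfies (Cl1), (Cl2), (Cl3), (Cl4). -/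
open Module

theorem stmt10 {K E : Type*} [Field K] [AddCommGroup E] [Module K E] [FiniteDimensional K E]
    (𝓕 : Set (Submodule K E))
    (hF1 : ⊤ ∈ 𝓕)
    (hF2 : ∀ F1 F2 : Submodule K E, F1 ∈ 𝓕 → F2 ∈ 𝓕 → F1 ⊓ F2 ∈ 𝓕)
    (hF3 : ∀ Fl ∈ 𝓕, ∀ x : Submodule K E, finrank K x = 1 → ¬ x ≤ Fl →
      ∃! G : Submodule K E, CoversIn 𝓕 Fl G ∧ x ≤ G) :
    (∀ A : Submodule K E, A ≤ sInf {G : Submodule K E | G ∈ 𝓕 ∧ A ≤ G}) ∧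
    (∀ A B : Submodule K E, A ≤ B →
      sInf {G : Submodule K E | G ∈ 𝓕 ∧ A ≤ G} ≤ sInf {G : Submodule K E | G ∈ 𝓕 ∧ B ≤ G}) ∧
    (∀ A : Submodule K E,
      sInf {G : Submodule K E | G ∈ 𝓕 ∧ sInf {G' : Submodule K E | G' ∈ 𝓕 ∧ A ≤ G'} ≤ G} =
        sInf {G : Submodule K E | G ∈ 𝓕 ∧ A ≤ G}) ∧
    (∀ (A x y : Submodule K E), finrank K x = 1 → finrank K y = 1 →
      y ≤ sInf {G : Submodule K E | G ∈ 𝓕 ∧ A ⊔ x ≤ G} →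
      ¬ y ≤ sInf {G : Submodule K E | G ∈ 𝓕 ∧ A ≤ G} →
      x ≤ sInf {G : Submodule K E | G ∈ 𝓕 ∧ A ⊔ y ≤ G}) := by
  -- The closure of A is itself a member of 𝓕 containing A.
  have key : ∀ A : Submodule K E,
      sInf {G : Submodule K E | G ∈ 𝓕 ∧ A ≤ G} ∈ 𝓕 := by
    intro A
    set S := {G : Submodule K E | G ∈ 𝓕 ∧ A ≤ G} with hS
    have htop : ⊤ ∈ S := ⟨hF1, le_top⟩
    have hTne : ((fun G : Submodule K E => finrank K G) '' S).Nonempty :=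
      ⟨_, ⟨⊤, htop, rfl⟩⟩
    obtain ⟨G0, hG0S, hG0r⟩ := Nat.sInf_mem hTne
    -- G0 has minimal rank in S; show G0 ≤ G for all G ∈ S
    have hmin : ∀ G ∈ S, G0 ≤ G := by
      intro G hG
      have hmem : G0 ⊓ G ∈ S := ⟨hF2 _ _ hG0S.1 hG.1, le_inf hG0S.2 hG.2⟩
      have hle : sInf ((fun G : Submodule K E => finrank K G) '' S) ≤
          finrank K (G0 ⊓ G : Submodule K E) :=
        Nat.sInf_le ⟨G0 ⊓ G, hmem, rfl⟩
      simp only [] at hG0r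
      rw [← hG0r] at hle
      have := Submodule.eq_of_le_of_finrank_le inf_le_left hle
      calc G0 = G0 ⊓ G := this.symm
        _ ≤ G := inf_le_right
    have : sInf S = G0 := le_antisymm (sInf_le hG0S) (le_sInf hmin)
    rw [this]; exact hG0S.1
  have cl1 : ∀ A : Submodule K E, A ≤ sInf {G : Submodule K E | G ∈ 𝓕 ∧ A ≤ G} :=
    fun A => le_sInf fun G hG => hG.2
  have clmem : ∀ A : Submodule K E,
      sInf {G : Submodule K E | G ∈ 𝓕 ∧ A ≤ G} ∈
        {G : Submodule K E | G ∈ 𝓕 ∧ A ≤ G} :=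
    fun A => ⟨key A, cl1 A⟩
  have cl2 : ∀ A B : Submodule K E, A ≤ B →
      sInf {G : Submodule K E | G ∈ 𝓕 ∧ A ≤ G} ≤
        sInf {G : Submodule K E | G ∈ 𝓕 ∧ B ≤ G} := by
    intro A B hAB
    exact sInf_le_sInf fun G hG => ⟨hG.1, hAB.trans hG.2⟩
  refine ⟨cl1, cl2, ?_, ?_⟩
  · intro A
    refine le_antisymm (sInf_le ⟨(clmem A).1, le_rfl⟩)
      (sInf_le_sInf fun G hG => ⟨hG.1, (cl1 A).trans hG.2⟩)
  · intro A x y hx hy hyAx hyA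
    set F := sInf {G : Submodule K E | G ∈ 𝓕 ∧ A ≤ G} with hF
    have hFmem := clmem A
    -- x is not in F, else cl(A ⊔ x) ≤ F, contradicting y ⊄ F
    have hxF : ¬ x ≤ F := by
      intro hxle
      exact hyA (hyAx.trans (sInf_le ⟨hFmem.1, sup_le hFmem.2 hxle⟩))
    obtain ⟨G, ⟨hGcov, hxG⟩, -⟩ := hF3 F hFmem.1 x hx hxF
    -- cl(A ⊔ x) ≤ G, hence y ≤ G
    have hAxG : sInf {G' : Submodule K E | G' ∈ 𝓕 ∧ A ⊔ x ≤ G'} ≤ G :=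
      sInf_le ⟨hGcov.2.1, sup_le (hFmem.2.trans hGcov.2.2.1) hxG⟩
    have hyG : y ≤ G := hyAx.trans hAxG
    -- cl(A ⊔ y) lies strictly between F and G, so equals G; it contains x? show = G
    set H := sInf {G' : Submodule K E | G' ∈ 𝓕 ∧ A ⊔ y ≤ G'} with hH
    have hHmem : H ∈ 𝓕 := key (A ⊔ y)
    have hHy : A ⊔ y ≤ H := le_sInf fun G' hG' => hG'.2
    have hFH : F ≤ H := le_sInf fun G' hG' =>
      sInf_le ⟨hG'.1, (le_sup_left.trans hG'.2 : A ≤ G')⟩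
    have hHG : H ≤ G := sInf_le ⟨hGcov.2.1, sup_le (hFmem.2.trans hGcov.2.2.1) hyG⟩
    have := hGcov.2.2.2 H hHmem hFH hHG
    rcases this with hHF | hHG'
    · exact absurd ((le_sup_right.trans hHy).trans hHF.le) hyA
    · rw [hHG']; exact hxG
end

section
/- Let E be a finite-dimensional vector space over a field F, let cl be a closure function on E and let A ⊆ B be subspaces of E with cl(A) = cl(B). Then A contains a basis for B; that is, there exists a subspace I ⊆ A with cl(I) = cl(B) and dim I = r_cl(B), where r_cl(B) = min{ dim I : I ⊆ B, cl(I) = cl(B) }. -/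
open Module

section Aux

variable {K E : Type*} [Field K] [AddCommGroup E] [Module K E] [FiniteDimensional K E]

/-- Complement within a submodule. -/
lemma exists_compl_within (S I : Submodule K E) (h : S ≤ I) :
    ∃ D, D ≤ I ∧ S ⊔ D = I ∧ S ⊓ D = ⊥ := by
  obtain ⟨q, hq⟩ := Submodule.exists_isCompl (S.comap I.subtype)
  refine ⟨q.map I.subtype, Submodule.map_subtype_le I q, ?_, ?_⟩
  · have := congrArg (Submodule.map I.subtype) hq.sup_eq_top
    rw [Submodule.map_sup, Submodule.map_comap_subtype, Submodule.map_subtype_top,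
      inf_of_le_right h] at this
    exact this
  · have := congrArg (Submodule.map I.subtype) hq.inf_eq_bot
    rw [Submodule.map_inf _ (Submodule.injective_subtype I), Submodule.map_comap_subtype,
      inf_of_le_right h, Submodule.map_bot] at this
    exact this

lemma exists_compl_within' (S I : Submodule K E) (h : S ≤ I) :
    ∃ D, D ≤ I ∧ S ⊔ D = I ∧ finrank K S + finrank K D = finrank K I := by
  obtain ⟨D, hDI, hsup, hinf⟩ := exists_compl_within S I h
  refine ⟨D, hDI, hsup, ?_⟩
  have := Submodule.finrank_sup_add_finrank_inf_eq S D
  rw [hsup, hinf] at this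
  simpa using this.symm

lemma finrank_sup_le' (S D : Submodule K E) :
    finrank K ↥(S ⊔ D) ≤ finrank K S + finrank K D := by
  have := Submodule.finrank_sup_add_finrank_inf_eq S D
  omega

variable (cl : Submodule K E → Submodule K E)

/-- `I` has minimal dimension among subspaces of itself with the same closure. -/
def MinSpan (I : Submodule K E) : Prop :=
  ∀ I' : Submodule K E, I' ≤ I → cl I' = cl I → finrank K I ≤ finrank K I'

variable (hCl1 : ∀ A : Submodule K E, A ≤ cl A)
    (hCl2 : ∀ A B : Submodule K E, A ≤ B → cl A ≤ cl B)
    (hCl3 : ∀ A : Submodule K E, cl (cl A) = cl A)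
    (hCl4 : ∀ (A x y : Submodule K E), finrank K x = 1 → finrank K y = 1 →
      y ≤ cl (A ⊔ x) → ¬ y ≤ cl A → x ≤ cl (A ⊔ y))

include hCl1 hCl2 hCl3 in
lemma minspan_loc {I W x : Submodule K E} (hI : MinSpan cl I)
    (hWI : W ≤ I) (hxI : x ≤ I) (hx1 : finrank K x = 1)
    (hxW : ¬ x ≤ W) (hxclW : x ≤ cl W) : False := by
  obtain ⟨D, hDI, hsup, hrk⟩ := exists_compl_within' (W ⊔ x) I (sup_le hWI hxI)
  have hWx : finrank K W < finrank K ↥(W ⊔ x) :=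
    Submodule.finrank_lt_finrank_of_lt (lt_of_le_of_ne le_sup_left
      (fun h => hxW (h ▸ le_sup_right)))
  have hclI' : cl (W ⊔ D) = cl I := by
    have hWDI : W ⊔ D ≤ I := by
      rw [← hsup]; exact sup_le (le_trans le_sup_left le_sup_left) le_sup_right
    refine le_antisymm (hCl2 _ _ hWDI) ?_
    have hIle : I ≤ cl (W ⊔ D) := by
      rw [← hsup]
      refine sup_le (sup_le ?_ ?_) ?_
      · exact le_trans le_sup_left (hCl1 _)
      · exact le_trans hxclW (hCl2 _ _ le_sup_left)
      · exact le_trans le_sup_right (hCl1 _)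
    calc cl I ≤ cl (cl (W ⊔ D)) := hCl2 _ _ hIle
      _ = cl (W ⊔ D) := hCl3 _
  have h1 : finrank K I ≤ finrank K ↥(W ⊔ D) :=
    hI _ (sup_le hWI hDI) hclI'
  have h2 : finrank K ↥(W ⊔ D) ≤ finrank K W + finrank K D := finrank_sup_le' W D
  omega

include hCl1 hCl2 hCl3 hCl4 in
lemma exchange_step {I J : Submodule K E} (hI : MinSpan cl I)
    (hIJ : I ≤ cl J) (hnle : ¬ I ≤ J) :
    ∃ J' : Submodule K E, finrank K J' ≤ finrank K J ∧ I ≤ cl J' ∧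
      finrank K ↥(I ⊓ J) < finrank K ↥(I ⊓ J') := by
  set W := I ⊓ J with hW
  -- pick a line x ≤ I not in J
  obtain ⟨v, hvI, hvJ⟩ := SetLike.not_le_iff_exists.mp hnle
  have hv0 : v ≠ 0 := fun h => hvJ (h ▸ J.zero_mem)
  set x : Submodule K E := Submodule.span K {v} with hx
  have hx1 : finrank K x = 1 := finrank_span_singleton hv0
  have hxI : x ≤ I := (Submodule.span_singleton_le_iff_mem v I).mpr hvI
  have hxJ : ¬ x ≤ J := fun h => hvJ (h (Submodule.mem_span_singleton_self v))
  -- minimal H with W ≤ H ≤ J and x ≤ cl H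
  set S : Set ℕ := {m | ∃ H : Submodule K E, W ≤ H ∧ H ≤ J ∧ x ≤ cl H ∧ finrank K H = m}
  have hSne : (finrank K J) ∈ S := ⟨J, inf_le_right, le_rfl, le_trans hxI hIJ, rfl⟩
  obtain ⟨H, hWH, hHJ, hxH, hHm⟩ := Nat.sInf_mem (Set.nonempty_of_mem hSne)
  have hne : H ≠ W := by
    rintro rfl
    exact minspan_loc cl hCl1 hCl2 hCl3 hI inf_le_left hxI hx1
      (fun h => hxJ (le_trans h inf_le_right)) hxH
  have hWltH : W < H := lt_of_le_of_ne hWH (Ne.symm hne)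
  -- pick a line y ≤ H not in W
  obtain ⟨u, huH, huW⟩ := SetLike.not_le_iff_exists.mp hWltH.not_ge
  have hu0 : u ≠ 0 := fun h => huW (h ▸ W.zero_mem)
  set y : Submodule K E := Submodule.span K {u} with hy
  have hy1 : finrank K y = 1 := finrank_span_singleton hu0
  have hyH : y ≤ H := (Submodule.span_singleton_le_iff_mem u H).mpr huH
  have hyW : ¬ y ≤ W := fun h => huW (h (Submodule.mem_span_singleton_self u))
  -- hyperplane H₀ of H containing W with H₀ ⊔ y = H
  obtain ⟨D₀, hD₀H, hD₀sup, hD₀rk⟩ := exists_compl_within' (W ⊔ y) H (sup_le hWH hyH)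
  set H₀ : Submodule K E := W ⊔ D₀ with hH₀
  have hWH₀ : W ≤ H₀ := le_sup_left
  have hH₀H : H₀ ≤ H := sup_le hWH hD₀H
  have hH₀y : H₀ ⊔ y = H := by
    rw [hH₀, sup_assoc, sup_comm D₀ y, ← sup_assoc, hD₀sup]
  have hWy : finrank K W < finrank K ↥(W ⊔ y) :=
    Submodule.finrank_lt_finrank_of_lt (lt_of_le_of_ne le_sup_left
      (fun h => hyW (h ▸ le_sup_right)))
  have hH₀lt : finrank K H₀ < finrank K H := by
    have h1 : finrank K H₀ ≤ finrank K W + finrank K D₀ := by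
      rw [hH₀]; exact finrank_sup_le' W D₀
    have h2 : finrank K ↥(W ⊔ y) ≤ finrank K W + finrank K y := finrank_sup_le' W y
    omega
  -- by minimality, x is not in cl H₀
  have hxH₀ : ¬ x ≤ cl H₀ := by
    intro hcon
    have : finrank K H₀ ∈ S := ⟨H₀, hWH₀, le_trans hH₀H hHJ, hcon, rfl⟩
    have := Nat.sInf_le this
    omega
  -- exchange
  have hyexc : y ≤ cl (H₀ ⊔ x) := by
    refine hCl4 H₀ y x hy1 hx1 ?_ hxH₀
    rw [hH₀y]; exact hxH
  -- hyperplane J₀ of J containing H₀ with J₀ ⊔ y = J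
  obtain ⟨D₁, hD₁J, hD₁sup, hD₁rk⟩ := exists_compl_within' H J hHJ
  set J₀ : Submodule K E := H₀ ⊔ D₁ with hJ₀
  have hJ₀y : J₀ ⊔ y = J := by
    rw [hJ₀, sup_assoc, sup_comm D₁ y, ← sup_assoc, hH₀y, hD₁sup]
  have hJ₀lt : finrank K J₀ < finrank K J := by
    have h1 : finrank K J₀ ≤ finrank K H₀ + finrank K D₁ := by
      rw [hJ₀]; exact finrank_sup_le' H₀ D₁
    omega
  refine ⟨J₀ ⊔ x, ?_, ?_, ?_⟩
  · have := finrank_sup_le' J₀ x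
    omega
  · -- I ≤ cl (J₀ ⊔ x)
    have hJle : J ≤ cl (J₀ ⊔ x) := by
      rw [← hJ₀y]
      refine sup_le (le_trans le_sup_left (hCl1 _)) ?_
      exact le_trans hyexc (hCl2 _ _ (sup_le (le_trans le_sup_left le_sup_left) le_sup_right))
    calc I ≤ cl J := hIJ
      _ ≤ cl (cl (J₀ ⊔ x)) := hCl2 _ _ hJle
      _ = cl (J₀ ⊔ x) := hCl3 _
  · -- dimension of intersection grows
    refine Submodule.finrank_lt_finrank_of_lt (lt_of_le_of_ne ?_ ?_)
    · refine le_inf inf_le_left ?_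
      calc I ⊓ J ≤ H₀ := hWH₀
        _ ≤ J₀ := le_sup_left
        _ ≤ J₀ ⊔ x := le_sup_left
    · intro hcon
      apply hxJ
      have hxW : x ≤ I ⊓ (J₀ ⊔ x) := le_inf hxI le_sup_right
      rw [← hcon] at hxW
      exact le_trans hxW inf_le_right

include hCl1 hCl2 hCl3 hCl4 in
lemma minspan_card_le (n : ℕ) : ∀ (I J : Submodule K E), MinSpan cl I → I ≤ cl J →
    finrank K I - finrank K ↥(I ⊓ J) ≤ n → finrank K I ≤ finrank K J := by
  induction n with
  | zero =>
    intro I J hI hIJ hn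
    have h1 : finrank K ↥(I ⊓ J) ≤ finrank K J := Submodule.finrank_mono inf_le_right
    omega
  | succ n ih =>
    intro I J hI hIJ hn
    by_cases hle : I ≤ J
    · exact Submodule.finrank_mono hle
    · obtain ⟨J', hJ'le, hIJ', hgrow⟩ :=
        exchange_step cl hCl1 hCl2 hCl3 hCl4 hI hIJ hle
      have h2 : finrank K ↥(I ⊓ J') ≤ finrank K I := Submodule.finrank_mono inf_le_left
      have := ih I J' hI hIJ' (by omega)
      omega

end Aux

/-- `rCl cl A` is the minimal dimension of a subspace `I ⊆ A` with `cl I = cl A`. -/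
noncomputable def rCl {K E : Type*} [Field K] [AddCommGroup E] [Module K E]
    (cl : Submodule K E → Submodule K E) (A : Submodule K E) : ℕ :=
  sInf {n : ℕ | ∃ I : Submodule K E, I ≤ A ∧ cl I = cl A ∧ finrank K I = n}

theorem stmt11 {K E : Type*} [Field K] [AddCommGroup E] [Module K E] [FiniteDimensional K E]
    (cl : Submodule K E → Submodule K E)
    (hCl1 : ∀ A : Submodule K E, A ≤ cl A)
    (hCl2 : ∀ A B : Submodule K E, A ≤ B → cl A ≤ cl B)
    (hCl3 : ∀ A : Submodule K E, cl (cl A) = cl A)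
    (hCl4 : ∀ (A x y : Submodule K E), finrank K x = 1 → finrank K y = 1 →
      y ≤ cl (A ⊔ x) → ¬ y ≤ cl A → x ≤ cl (A ⊔ y))
    (A B : Submodule K E) (hAB : A ≤ B) (hclAB : cl A = cl B) :
    ∃ I : Submodule K E, I ≤ A ∧ cl I = cl B ∧ finrank K I = rCl cl B := by
  -- pick I ⊆ A of minimal dimension with cl I = cl A
  have hAne : (finrank K A) ∈ {n : ℕ | ∃ I : Submodule K E, I ≤ A ∧ cl I = cl A ∧ finrank K I = n} :=
    ⟨A, le_rfl, rfl, rfl⟩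
  obtain ⟨I, hIA, hclI, hIrk⟩ := Nat.sInf_mem (Set.nonempty_of_mem hAne)
  have hIms : MinSpan cl I := by
    intro I' hI'I hclI'
    have : finrank K I' ∈ {n : ℕ | ∃ I : Submodule K E, I ≤ A ∧ cl I = cl A ∧ finrank K I = n} :=
      ⟨I', le_trans hI'I hIA, by rw [hclI', hclI], rfl⟩
    rw [hIrk]
    exact Nat.sInf_le this
  refine ⟨I, hIA, by rw [hclI, hclAB], ?_⟩
  -- rCl cl B ≤ finrank I since I ≤ B and cl I = cl B
  have hle1 : rCl cl B ≤ finrank K I :=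
    Nat.sInf_le ⟨I, le_trans hIA hAB, by rw [hclI, hclAB], rfl⟩
  -- pick J ⊆ B achieving rCl cl B
  have hBne : (finrank K B) ∈ {n : ℕ | ∃ I : Submodule K E, I ≤ B ∧ cl I = cl B ∧ finrank K I = n} :=
    ⟨B, le_rfl, rfl, rfl⟩
  obtain ⟨J, hJB, hclJ, hJrk⟩ := Nat.sInf_mem (Set.nonempty_of_mem hBne)
  have hIJ : I ≤ cl J := by
    calc I ≤ cl I := hCl1 I
      _ = cl J := by rw [hclI, hclAB, hclJ]
  have hle2 : finrank K I ≤ finrank K J :=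
    minspan_card_le cl hCl1 hCl2 hCl3 hCl4 (finrank K I - finrank K ↥(I ⊓ J)) I J hIms hIJ le_rfl
  rw [rCl] at hle1 ⊢
  omega
end

section
/- Let E be a finite-dimensional vector space over a field F and let cl be a closure function on E. Define r_cl(A) = min{ dim I : I ⊆ A, cl(I) = cl(A) } for each subspace A of E. Then r_cl satisfies the rank axioms: (R1) 0 ≤ r_cl(A) ≤ dim A for every subspace A; (R2) r_cl(A) ≤ r_cl(B) whenever A ⊆ B; (R3) r_cl(A+B) + r_cl(A∩B) ≤ r_cl(A) + r_cl(B) for all subspaces A, B. -/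
/-!
Call a set `I` of vectors independent when no `v ∈ I` lies in `cl (span (I \ {v}))`. Axiom (Cl4)
says exactly that an independent `I` stays independent after adding a vector `v` if and only if
`v ∉ cl (span I)`. Hence a maximal independent set `B` has `cl (span B) = E`, which yields the
augmentation axiom, and since independent sets are linearly independent, their size is bounded by
`dim E`. So the vectors of `E` carry a matroid, and its closure is `X ↦ cl (span X)`. A matroid basis
of `A` spans a subspace `I ≤ A` with `cl I = cl A`; conversely, a linear basis of such an `I` spans
`A` in the matroid. So `r_cl` is the matroid rank on subspaces, and (R2), (R3) follow from
monotonicity and submodularity of matroid rank, because `A + B` lies in the matroid closure of `A ∪ B`.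
-/

open Module

open Set Submodule

theorem LinearIndepOn.encard_eq_finrank_span {K E : Type*} [DivisionRing K] [AddCommGroup E]
    [Module K E] [FiniteDimensional K E] {S : Set E} (hS : LinearIndepOn K id S) :
    S.encard = finrank K (span K S) := by
  rw [← toENat_rank_span_set hS, image_id, ← finrank_eq_rank, Cardinal.toENat_nat]

section rCl

variable {K E : Type*} [Field K] [AddCommGroup E] [Module K E] {cl : Submodule K E → Submodule K E}

theorem rCl_le_finrank_of_closure_eq {A I : Submodule K E} (hIA : I ≤ A) (hI : cl I = cl A) :
    rCl cl A ≤ finrank K I :=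
  Nat.sInf_le ⟨I, hIA, hI, rfl⟩

theorem exists_closure_eq_finrank_eq_rCl (cl : Submodule K E → Submodule K E)
    (A : Submodule K E) : ∃ I ≤ A, cl I = cl A ∧ finrank K I = rCl cl A :=
  Nat.sInf_mem (s := {n | ∃ I ≤ A, cl I = cl A ∧ finrank K I = n}) ⟨_, A, le_rfl, rfl, rfl⟩

end rCl

namespace ClosureOperator

variable {K E : Type*} [Field K] [AddCommGroup E] [Module K E]
  (c : ClosureOperator (Submodule K E))

def Exchange : Prop :=
  ∀ (A x y : Submodule K E), finrank K x = 1 → finrank K y = 1 →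
    y ≤ c (A ⊔ x) → ¬ y ≤ c A → x ≤ c (A ⊔ y)

def Indep (I : Set E) : Prop := ∀ v ∈ I, v ∉ c (span K (I \ {v}))

variable {c}

theorem Exchange.mem_closure_span_insert (hc : c.Exchange) {S : Set E} {v w : E} (hv : v ≠ 0)
    (hw : w ∈ c (span K (insert v S))) (hwS : w ∉ c (span K S)) :
    v ∈ c (span K (insert w S)) := by
  have hw0 : w ≠ 0 := by rintro rfl; exact hwS (zero_mem _)
  rw [span_insert, sup_comm] at hw ⊢
  rw [← span_singleton_le_iff_mem] at hw hwS ⊢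
  exact hc _ _ _ (finrank_span_singleton hv) (finrank_span_singleton hw0) hw hwS

theorem Indep.mono {I J : Set E} (hJ : c.Indep J) (hIJ : I ⊆ J) : c.Indep I :=
  fun v hv hmem ↦ hJ v (hIJ hv) (c.monotone (span_mono (sdiff_subset_sdiff_left hIJ)) hmem)

theorem Indep.linearIndepOn {I : Set E} (hI : c.Indep I) : LinearIndepOn K _root_.id I :=
  linearIndepOn_iff_notMem_span.2 fun v hv hmem ↦ hI v hv (c.le_closure _ (by simpa using hmem))

theorem Indep.encard_le_finrank [FiniteDimensional K E] {I : Set E} (hI : c.Indep I) :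
    I.encard ≤ finrank K E := by
  rw [hI.linearIndepOn.encard_eq_finrank_span]
  exact_mod_cast (span K I).finrank_le

theorem Indep.insert_indep_iff (hc : c.Exchange) {I : Set E} {v : E} (hI : c.Indep I)
    (hvI : v ∉ I) : c.Indep (insert v I) ↔ v ∉ c (span K I) := by
  refine ⟨fun h ↦ by simpa [hvI] using h v (mem_insert v I), fun hv u hu hmem ↦ ?_⟩
  obtain rfl | huI := hu
  · exact hv (by simpa [hvI] using hmem)
  have hv0 : v ≠ 0 := by rintro rfl; exact hv (zero_mem _)
  have huv : u ≠ v := by rintro rfl; exact hvI huI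
  rw [insert_sdiff_of_notMem _ (by simpa using huv.symm)] at hmem
  have := hc.mem_closure_span_insert hv0 hmem (hI u huI)
  rw [insert_sdiff_singleton, insert_eq_of_mem huI] at this
  exact hv this

theorem Indep.maximal_iff (hc : c.Exchange) {I : Set E} (hI : c.Indep I) :
    Maximal c.Indep I ↔ c (span K I) = ⊤ := by
  refine ⟨fun hmax ↦ eq_top_iff'.2 fun v ↦ ?_, fun htop ↦ ⟨hI, fun J hJ hIJ v hvJ ↦ ?_⟩⟩
  · by_contra hv
    have hvI : v ∉ I := fun h ↦ hv (c.le_closure _ (subset_span h))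
    exact hvI (hmax.2 ((hI.insert_indep_iff hc hvI).2 hv) (subset_insert v I) (mem_insert v I))
  · by_contra hvI
    have hins := hJ.mono (insert_subset hvJ hIJ)
    exact (hI.insert_indep_iff hc hvI).1 hins (htop ▸ mem_top)

theorem Indep.exists_insert_of_not_maximal (hc : c.Exchange) {I B : Set E} (hI : c.Indep I)
    (hImax : ¬ Maximal c.Indep I) (hB : Maximal c.Indep B) :
    ∃ x ∈ B \ I, c.Indep (insert x I) := by
  by_contra! hBI
  have hB_sub : B ⊆ c (span K I) := fun x hxB ↦ by
    by_cases hxI : x ∈ I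
    · exact c.le_closure _ (subset_span hxI)
    · simpa using mt (hI.insert_indep_iff hc hxI).2 (hBI x ⟨hxB, hxI⟩)
  have hle : c (span K B) ≤ c (span K I) := c.le_closure_iff.1 (span_le.2 hB_sub)
  rw [(hB.prop.maximal_iff hc).1 hB, top_le_iff] at hle
  exact hImax ((hI.maximal_iff hc).2 hle)

variable [FiniteDimensional K E]

def matroid (hc : c.Exchange) : Matroid E :=
  (IndepMatroid.ofBdd univ c.Indep
    (fun _ hv ↦ hv.elim)
    (fun _ _ hJ hIJ ↦ hJ.mono hIJ)
    (fun _ _ hI hImax hB ↦ hI.exists_insert_of_not_maximal hc hImax hB)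
    (fun _ _ ↦ subset_univ _)
    ⟨finrank K E, fun _ hI ↦ hI.encard_le_finrank⟩).matroid

@[simp]
theorem matroid_indep (hc : c.Exchange) : (c.matroid hc).Indep = c.Indep := rfl

theorem Indep.matroid_closure_eq (hc : c.Exchange) {I : Set E} (hI : c.Indep I) :
    (c.matroid hc).closure I = c (span K I) := by
  ext v
  by_cases hvI : v ∈ I
  · exact iff_of_true ((c.matroid hc).subset_closure I (subset_univ I) hvI)
      (c.le_closure _ (subset_span hvI))
  · have hI' : (c.matroid hc).Indep I := hI
    rw [← not_iff_not, hI'.notMem_closure_iff_of_notMem hvI (mem_univ v), matroid_indep,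
      hI.insert_indep_iff hc hvI, SetLike.mem_coe]

theorem matroid_closure_eq (hc : c.Exchange) (X : Set E) :
    (c.matroid hc).closure X = c (span K X) := by
  obtain ⟨I, hIX⟩ := (c.matroid hc).exists_isBasis X (subset_univ X)
  have hI : c.Indep I := hIX.indep
  rw [← hIX.closure_eq_closure, hI.matroid_closure_eq hc]
  refine le_antisymm (c.monotone (span_mono hIX.subset)) (c.le_closure_iff.1 (span_le.2 ?_))
  rw [← hI.matroid_closure_eq hc]
  exact hIX.subset_closure

theorem matroid_eRk_eq_rCl (hc : c.Exchange) (A : Submodule K E) :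
    (c.matroid hc).eRk A = rCl c A := by
  set M := c.matroid hc
  refine le_antisymm ?_ ?_
  · obtain ⟨I, hIA, hcI, hI⟩ := exists_closure_eq_finrank_eq_rCl c A
    obtain ⟨S, -, hSI, hS⟩ := exists_linearIndependent K (I : Set E)
    rw [span_eq] at hSI
    have hAS : (A : Set E) ⊆ M.closure S := by
      rw [matroid_closure_eq, hSI, hcI]
      exact c.le_closure A
    calc M.eRk A ≤ M.eRk (M.closure S) := M.eRk_mono hAS
      _ = M.eRk S := M.eRk_closure_eq S
      _ ≤ S.encard := M.eRk_le_encard S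
      _ = rCl c A := by rw [LinearIndepOn.encard_eq_finrank_span hS, hSI, hI]
  · obtain ⟨I, hIA⟩ := M.exists_isBasis A (subset_univ _)
    have hI : c.Indep I := hIA.indep
    have hcI : c (span K I) = c A := by
      refine le_antisymm (c.monotone (span_le.2 hIA.subset)) (c.le_closure_iff.1 ?_)
      rw [← SetLike.coe_subset_coe, ← hI.matroid_closure_eq hc]
      exact hIA.subset_closure
    rw [← hIA.encard_eq_eRk, hI.linearIndepOn.encard_eq_finrank_span, Nat.cast_le]
    exact rCl_le_finrank_of_closure_eq (span_le.2 hIA.subset) hcI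

theorem rCl_mono (hc : c.Exchange) {A B : Submodule K E} (hAB : A ≤ B) : rCl c A ≤ rCl c B := by
  have := (c.matroid hc).eRk_mono (show (A : Set E) ⊆ B from hAB)
  rwa [matroid_eRk_eq_rCl, matroid_eRk_eq_rCl, Nat.cast_le] at this

theorem rCl_sup_add_rCl_inf_le (hc : c.Exchange) (A B : Submodule K E) :
    rCl c (A ⊔ B) + rCl c (A ⊓ B) ≤ rCl c A + rCl c B := by
  set M := c.matroid hc
  have hsup : M.eRk (A ⊔ B : Submodule K E) ≤ M.eRk (A ∪ B) := by
    have hcl : ((A ⊔ B : Submodule K E) : Set E) ⊆ M.closure (A ∪ B) := by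
      rw [matroid_closure_eq, span_union, span_eq, span_eq]
      exact c.le_closure _
    exact (M.eRk_mono hcl).trans_eq (M.eRk_closure_eq _)
  have key : (rCl c (A ⊔ B) + rCl c (A ⊓ B) : ℕ∞) ≤ rCl c A + rCl c B := by
    simp only [← matroid_eRk_eq_rCl hc, coe_inf]
    calc _ ≤ M.eRk (A ∪ B) + M.eRk (A ∩ B) := add_le_add_left hsup _
      _ = M.eRk (A ∩ B) + M.eRk (A ∪ B) := add_comm _ _
      _ ≤ _ := M.eRk_inter_add_eRk_union_le A B
  exact_mod_cast key

end ClosureOperator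

theorem stmt12 {K E : Type*} [Field K] [AddCommGroup E] [Module K E] [FiniteDimensional K E]
    (cl : Submodule K E → Submodule K E)
    (hCl1 : ∀ A : Submodule K E, A ≤ cl A)
    (hCl2 : ∀ A B : Submodule K E, A ≤ B → cl A ≤ cl B)
    (hCl3 : ∀ A : Submodule K E, cl (cl A) = cl A)
    (hCl4 : ∀ (A x y : Submodule K E), finrank K x = 1 → finrank K y = 1 →
      y ≤ cl (A ⊔ x) → ¬ y ≤ cl A → x ≤ cl (A ⊔ y)) :
    (∀ A : Submodule K E, rCl cl A ≤ finrank K A) ∧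
    (∀ A B : Submodule K E, A ≤ B → rCl cl A ≤ rCl cl B) ∧
    (∀ A B : Submodule K E, rCl cl (A ⊔ B) + rCl cl (A ⊓ B) ≤ rCl cl A + rCl cl B) := by
  let c : ClosureOperator (Submodule K E) :=
    { toFun := cl, monotone' := hCl2, le_closure' := hCl1, idempotent' := hCl3 }
  have hc : c.Exchange := hCl4
  exact ⟨fun A ↦ rCl_le_finrank_of_closure_eq le_rfl rfl,
    fun A B ↦ ClosureOperator.rCl_mono hc, ClosureOperator.rCl_sup_add_rCl_inf_le hc⟩
end

section
/- Let E be a finite-dimensional vector space over a field F and let F be a collection of subspaces of E satisfying the flat axioms (F1), (F2), (F3). Let H_F := { H ∈ F : there is no H' ∈ F with H ⊊ H' ⊊ E }. Then every F ∈ F is equal to the intersection of all H ∈ H_F with F ⊆ H (the empty intersection being E). -/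
open Module

theorem stmt14 {K E : Type*} [Field K] [AddCommGroup E] [Module K E] [FiniteDimensional K E]
    (𝓕 : Set (Submodule K E))
    (hF1 : ⊤ ∈ 𝓕)
    (hF2 : ∀ F1 F2 : Submodule K E, F1 ∈ 𝓕 → F2 ∈ 𝓕 → F1 ⊓ F2 ∈ 𝓕)
    (hF3 : ∀ Fl ∈ 𝓕, ∀ x : Submodule K E, finrank K x = 1 → ¬ x ≤ Fl →
      ∃! G : Submodule K E, CoversIn 𝓕 Fl G ∧ x ≤ G)
    (Fl : Submodule K E) (hFl : Fl ∈ 𝓕) :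
    Fl = sInf {H : Submodule K E |
      (H ∈ 𝓕 ∧ ¬ ∃ H' ∈ 𝓕, H < H' ∧ H' < ⊤) ∧ Fl ≤ H} := by
  refine le_antisymm (le_sInf fun H hH => hH.2) fun v hv => ?_
  by_contra hvF
  have hv0 : v ≠ 0 := fun h => hvF (h ▸ Fl.zero_mem)
  set x : Submodule K E := K ∙ v with hxdef
  have hx1 : finrank K x = 1 := finrank_span_singleton hv0
  have hxF : ¬ x ≤ Fl := fun h => hvF (h (Submodule.mem_span_singleton_self v))
  obtain ⟨H, ⟨⟨hH𝓕, hHx⟩, hFH⟩, hmax⟩ :=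
    (IsWellFounded.wf (α := Submodule K E) (r := (· > ·))).has_min
      {H | (H ∈ 𝓕 ∧ ¬ x ≤ H) ∧ Fl ≤ H} ⟨Fl, ⟨hFl, hxF⟩, le_rfl⟩
  -- every flat strictly above `H` contains `x`
  have habove : ∀ H' ∈ 𝓕, H < H' → x ≤ H' := by
    intro H' h𝓕 hlt
    by_contra hx
    exact hmax H' ⟨⟨h𝓕, hx⟩, hFH.trans hlt.le⟩ hlt
  -- `H` is a coatom of `𝓕`
  have hcoatom : ¬ ∃ H' ∈ 𝓕, H < H' ∧ H' < ⊤ := by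
    rintro ⟨H', h𝓕', hlt, htop⟩
    obtain ⟨w, hw⟩ : ∃ w, w ∉ H' := by
      by_contra h
      push_neg at h
      exact htop.ne (Submodule.eq_top_iff'.2 h)
    have hw0 : w ≠ 0 := fun h => hw (h ▸ H'.zero_mem)
    have hy1 : finrank K (K ∙ w) = 1 := finrank_span_singleton hw0
    have hyH : ¬ (K ∙ w) ≤ H :=
      fun h => hw (hlt.le (h (Submodule.mem_span_singleton_self w)))
    obtain ⟨G, ⟨⟨_, hG𝓕, hHG, hcov⟩, hyG⟩, -⟩ := hF3 H hH𝓕 (K ∙ w) hy1 hyH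
    have hHGlt : H < G := lt_of_le_of_ne hHG (fun h => hyH (h ▸ hyG))
    have hxG : x ≤ G := habove G hG𝓕 hHGlt
    have hxH' : x ≤ H' := habove H' h𝓕' hlt
    rcases hcov (G ⊓ H') (hF2 G H' hG𝓕 h𝓕') (le_inf hHG hlt.le) inf_le_left with h | h
    · exact hHx (h ▸ le_inf hxG hxH')
    · exact hw ((h ▸ inf_le_right : G ≤ H') (hyG (Submodule.mem_span_singleton_self w)))
  have : v ∈ H := Submodule.mem_sInf.1 hv H ⟨⟨hH𝓕, hcoatom⟩, hFH⟩
  exact hHx ((Submodule.span_singleton_le_iff_mem v H).2 this)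
end

section
/- Let E be a finite-dimensional vector space over a field F and let H be a collection of subspaces of E satisfying the hyperplane axioms (H1), (H2), (H3). Then the collection F_H of all intersections of subfamilies of H (the empty intersection being E) satisfies the flat axioms (F1), (F2), (F3). -/
/-!
Flats are closed under intersection by construction. The cover of a flat `F` through a point
`x ⊄ F` is the closure of `F + x`, the intersection of all hyperplanes containing it; it is the
only candidate, and it is a cover because of a strong form of (H3): if `e` is a point outside
the hyperplanes `H₁, H₂` and `f ≤ H₂`, `f ⊄ H₁`, some hyperplane contains `(H₁ ∩ H₂) + e` but
not `f`. As with strong circuit elimination in matroids, this follows from (H3) by induction on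
`H₁ ∩ H₂`, from larger meets down. If a flat `C` with `F < C ≤ cl(F + x)` missed `x`, this
exchange applied to a hyperplane `H ⊇ C` missing `x` and a hyperplane `H₀ ⊇ F` missing `C` would
give a hyperplane containing `F + x` but not `C`, which is absurd.
-/

open Module

section Flats

variable {α : Type*} [CompleteLattice α] (𝓗 : Set α)

def flats : Set α := {A | ∃ S ⊆ 𝓗, A = sInf S}

def flatClosure (B : α) : α := sInf {H ∈ 𝓗 | B ≤ H}

variable {𝓗}

theorem top_mem_flats : ⊤ ∈ flats 𝓗 := ⟨∅, Set.empty_subset _, sInf_empty.symm⟩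

theorem inf_mem_flats {A B : α} (hA : A ∈ flats 𝓗) (hB : B ∈ flats 𝓗) : A ⊓ B ∈ flats 𝓗 := by
  obtain ⟨S, hS, rfl⟩ := hA
  obtain ⟨T, hT, rfl⟩ := hB
  exact ⟨S ∪ T, Set.union_subset hS hT, sInf_union.symm⟩

theorem flatClosure_mem_flats (B : α) : flatClosure 𝓗 B ∈ flats 𝓗 :=
  ⟨_, fun _ hH => hH.1, rfl⟩

theorem le_flatClosure (B : α) : B ≤ flatClosure 𝓗 B :=
  le_sInf fun _ hH => hH.2

theorem le_iff_forall_of_mem_flats {A B : α} (hA : A ∈ flats 𝓗) :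
    B ≤ A ↔ ∀ H ∈ 𝓗, A ≤ H → B ≤ H := by
  obtain ⟨S, hS, rfl⟩ := hA
  exact ⟨fun hB _ _ hAH => hB.trans hAH, fun h => le_sInf fun H hH => h H (hS hH) (sInf_le hH)⟩

theorem flatClosure_le {A B : α} (hA : A ∈ flats 𝓗) (hBA : B ≤ A) : flatClosure 𝓗 B ≤ A :=
  (le_iff_forall_of_mem_flats hA).2 fun _ hH hAH => sInf_le ⟨hH, hBA.trans hAH⟩

end Flats

section Hyperplanes

variable {K E : Type*} [Field K] [AddCommGroup E] [Module K E]

def HyperplaneExchange (𝓗 : Set (Submodule K E)) : Prop :=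
  ∀ H1 H2 : Submodule K E, H1 ∈ 𝓗 → H2 ∈ 𝓗 → H1 ≠ H2 →
    ∀ x : Submodule K E, finrank K x = 1 → ∃ H3 ∈ 𝓗, (H1 ⊓ H2) ⊔ x ≤ H3

theorem exists_finrank_eq_one_le_not_le {A B : Submodule K E} (h : ¬ A ≤ B) :
    ∃ p : Submodule K E, finrank K p = 1 ∧ p ≤ A ∧ ¬ p ≤ B := by
  obtain ⟨v, hvA, hvB⟩ := SetLike.not_le_iff_exists.1 h
  refine ⟨K ∙ v, finrank_span_singleton fun h0 => hvB (h0 ▸ B.zero_mem),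
    (Submodule.span_singleton_le_iff_mem v A).2 hvA,
    fun hv => hvB (hv (Submodule.mem_span_singleton_self v))⟩

theorem eq_flatClosure_sup_of_coversIn {𝓗 : Set (Submodule K E)} {F G x : Submodule K E}
    (hcov : CoversIn (flats 𝓗) F G) (hxG : x ≤ G) (hxF : ¬ x ≤ F) : G = flatClosure 𝓗 (F ⊔ x) := by
  obtain ⟨-, hG, hFG, hmin⟩ := hcov
  have hxcl : x ≤ flatClosure 𝓗 (F ⊔ x) := le_sup_right.trans (le_flatClosure _)
  have hclG : flatClosure 𝓗 (F ⊔ x) ≤ G := flatClosure_le hG (sup_le hFG hxG)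
  rcases hmin _ (flatClosure_mem_flats _) (le_sup_left.trans (le_flatClosure _)) hclG with h | h
  · exact absurd (h ▸ hxcl) hxF
  · exact h.symm

variable [FiniteDimensional K E] {𝓗 : Set (Submodule K E)}

theorem HyperplaneExchange.exists_not_le (hH2 : IsAntichain (· ≤ ·) 𝓗)
    (hH3 : HyperplaneExchange 𝓗) {H1 H2 e f : Submodule K E} (h1 : H1 ∈ 𝓗) (h2 : H2 ∈ 𝓗)
    (he : finrank K e = 1) (heH1 : ¬ e ≤ H1) (heH2 : ¬ e ≤ H2) (hfH1 : ¬ f ≤ H1) (hfH2 : f ≤ H2) :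
    ∃ H3 ∈ 𝓗, H1 ⊓ H2 ⊔ e ≤ H3 ∧ ¬ f ≤ H3 := by
  induction hP : H1 ⊓ H2 using WellFoundedGT.induction generalizing H1 H2 e f with
  | _ P ih =>
    subst hP
    -- If `H3` contains `f`, pick a point `g ∈ H1 \ H3` and exchange in `(H2, H3)`, then in
    -- `(H1, H4)`; both pairs have a strictly larger meet than `(H1, H2)`.
    obtain ⟨H3, h3, hle3⟩ := hH3 H1 H2 h1 h2 (fun h => hfH1 (h ▸ hfH2)) e he
    by_cases hfH3 : f ≤ H3
    case neg => exact ⟨H3, h3, hle3, hfH3⟩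
    have heH3 : e ≤ H3 := le_sup_right.trans hle3
    have h12le3 : H1 ⊓ H2 ≤ H3 := le_sup_left.trans hle3
    obtain ⟨g, hg, hgH1, hgH3⟩ := exists_finrank_eq_one_le_not_le
      (hH2 h1 h3 fun h => heH1 (h ▸ heH3))
    have hgH2 : ¬ g ≤ H2 := fun h => hgH3 ((le_inf hgH1 h).trans h12le3)
    have h12le23 : H1 ⊓ H2 ≤ H2 ⊓ H3 := le_inf inf_le_right h12le3
    have hlt23 : H1 ⊓ H2 < H2 ⊓ H3 :=
      h12le23.lt_of_not_ge fun h => hfH1 (((le_inf hfH2 hfH3).trans h).trans inf_le_left)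
    obtain ⟨H4, h4, hle4, heH4⟩ := ih _ hlt23 h2 h3 hg hgH2 hgH3 heH2 heH3 rfl
    have h23le4 : H2 ⊓ H3 ≤ H4 := le_sup_left.trans hle4
    have hgH4 : g ≤ H4 := le_sup_right.trans hle4
    have hfH4 : f ≤ H4 := (le_inf hfH2 hfH3).trans h23le4
    have h12le14 : H1 ⊓ H2 ≤ H1 ⊓ H4 := le_inf inf_le_left (h12le23.trans h23le4)
    have hlt14 : H1 ⊓ H2 < H1 ⊓ H4 :=
      h12le14.lt_of_not_ge fun h => hgH2 (((le_inf hgH1 hgH4).trans h).trans inf_le_right)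
    obtain ⟨H5, h5, hle5, hfH5⟩ := ih _ hlt14 h1 h4 he heH1 heH4 hfH1 hfH4 rfl
    exact ⟨H5, h5, (sup_le_sup_right h12le14 e).trans hle5, hfH5⟩

theorem le_of_le_flatClosure_sup (hH2 : IsAntichain (· ≤ ·) 𝓗) (hH3 : HyperplaneExchange 𝓗)
    {F C x H : Submodule K E} (hF : F ∈ flats 𝓗) (hx : finrank K x = 1)
    (hC : C ≤ flatClosure 𝓗 (F ⊔ x)) (hCF : ¬ C ≤ F) (hH : H ∈ 𝓗) (hFH : F ≤ H)
    (hCH : C ≤ H) : x ≤ H := by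
  by_contra hxH
  obtain ⟨H0, h0, hFH0, hCH0⟩ : ∃ H0 ∈ 𝓗, F ≤ H0 ∧ ¬ C ≤ H0 := by
    simpa using mt (le_iff_forall_of_mem_flats hF).2 hCF
  have hxH0 : ¬ x ≤ H0 := fun h => hCH0 (hC.trans (sInf_le ⟨h0, sup_le hFH0 h⟩))
  obtain ⟨H3, h3, hle3, hCH3⟩ := hH3.exists_not_le hH2 h0 hH hx hxH0 hxH hCH0 hCH
  have hFxH3 : F ⊔ x ≤ H3 := sup_le_sup_right (le_inf hFH0 hFH) x |>.trans hle3
  exact hCH3 (hC.trans (sInf_le ⟨h3, hFxH3⟩))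

theorem coversIn_flatClosure_sup (hH2 : IsAntichain (· ≤ ·) 𝓗) (hH3 : HyperplaneExchange 𝓗)
    {F x : Submodule K E} (hF : F ∈ flats 𝓗) (hx : finrank K x = 1) :
    CoversIn (flats 𝓗) F (flatClosure 𝓗 (F ⊔ x)) := by
  refine ⟨hF, flatClosure_mem_flats _, le_sup_left.trans (le_flatClosure _),
    fun C hC hFC hCG => ?_⟩
  by_cases hCF : C ≤ F
  · exact .inl (le_antisymm hCF hFC)
  refine .inr (le_antisymm hCG (flatClosure_le hC (sup_le hFC ?_)))
  exact (le_iff_forall_of_mem_flats hC).2 fun H hH hCH =>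
    le_of_le_flatClosure_sup hH2 hH3 hF hx hCG hCF hH (hFC.trans hCH) hCH

end Hyperplanes

theorem stmt17_general {K E : Type*} [Field K] [AddCommGroup E] [Module K E] [FiniteDimensional K E]
    (𝓗 : Set (Submodule K E))
    (hH2 : ∀ H1 H2 : Submodule K E, H1 ∈ 𝓗 → H2 ∈ 𝓗 → H1 ≤ H2 → H1 = H2)
    (hH3 : ∀ H1 H2 : Submodule K E, H1 ∈ 𝓗 → H2 ∈ 𝓗 → H1 ≠ H2 →
      ∀ x : Submodule K E, finrank K x = 1 → ∃ H3 ∈ 𝓗, (H1 ⊓ H2) ⊔ x ≤ H3) :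
    ((⊤ : Submodule K E) ∈ {A : Submodule K E | ∃ S ⊆ 𝓗, A = sInf S}) ∧
    (∀ F1 F2 : Submodule K E, F1 ∈ {A : Submodule K E | ∃ S ⊆ 𝓗, A = sInf S} →
      F2 ∈ {A : Submodule K E | ∃ S ⊆ 𝓗, A = sInf S} →
      F1 ⊓ F2 ∈ {A : Submodule K E | ∃ S ⊆ 𝓗, A = sInf S}) ∧
    (∀ Fl ∈ {A : Submodule K E | ∃ S ⊆ 𝓗, A = sInf S}, ∀ x : Submodule K E,
      finrank K x = 1 → ¬ x ≤ Fl →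
      ∃! G : Submodule K E,
        CoversIn {A : Submodule K E | ∃ S ⊆ 𝓗, A = sInf S} Fl G ∧ x ≤ G) := by
  have hanti : IsAntichain (· ≤ ·) 𝓗 := fun H1 h1 H2 h2 hne hle => hne (hH2 H1 H2 h1 h2 hle)
  refine ⟨top_mem_flats, fun _ _ => inf_mem_flats, fun F hF x hx hxF => ?_⟩
  refine ⟨flatClosure 𝓗 (F ⊔ x), ⟨coversIn_flatClosure_sup hanti hH3 hF hx, ?_⟩, ?_⟩
  · exact le_sup_right.trans (le_flatClosure _)
  · exact fun G ⟨hcov, hxG⟩ => eq_flatClosure_sup_of_coversIn hcov hxG hxF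

theorem stmt17 {K E : Type*} [Field K] [AddCommGroup E] [Module K E] [FiniteDimensional K E]
    (𝓗 : Set (Submodule K E))
    (hH1 : ⊤ ∉ 𝓗)
    (hH2 : ∀ H1 H2 : Submodule K E, H1 ∈ 𝓗 → H2 ∈ 𝓗 → H1 ≤ H2 → H1 = H2)
    (hH3 : ∀ H1 H2 : Submodule K E, H1 ∈ 𝓗 → H2 ∈ 𝓗 → H1 ≠ H2 →
      ∀ x : Submodule K E, finrank K x = 1 → ∃ H3 ∈ 𝓗, (H1 ⊓ H2) ⊔ x ≤ H3) :
    ((⊤ : Submodule K E) ∈ {A : Submodule K E | ∃ S ⊆ 𝓗, A = sInf S}) ∧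
    (∀ F1 F2 : Submodule K E, F1 ∈ {A : Submodule K E | ∃ S ⊆ 𝓗, A = sInf S} →
      F2 ∈ {A : Submodule K E | ∃ S ⊆ 𝓗, A = sInf S} →
      F1 ⊓ F2 ∈ {A : Submodule K E | ∃ S ⊆ 𝓗, A = sInf S}) ∧
    (∀ Fl ∈ {A : Submodule K E | ∃ S ⊆ 𝓗, A = sInf S}, ∀ x : Submodule K E,
      finrank K x = 1 → ¬ x ≤ Fl →
      ∃! G : Submodule K E,
        CoversIn {A : Submodule K E | ∃ S ⊆ 𝓗, A = sInf S} Fl G ∧ x ≤ G) :=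
  stmt17_general 𝓗 hH2 hH3
end

section
/- Let E be a finite-dimensional vector space over a field F and let I be a collection of subspaces of E satisfying the independence axioms (I1), (I2), (I3), (I4). Then the complementary collection D := { D ∈ L(E) : D ∉ I } satisfies the dependence axioms (D1), (D2), (D3). -/
open Module

lemma exists_maxIn {K E : Type*} [Field K] [AddCommGroup E] [Module K E] [FiniteDimensional K E]
    (𝓘 : Set (Submodule K E)) (hbot : (⊥ : Submodule K E) ∈ 𝓘) (X : Submodule K E) :
    ∃ M, M ∈ maxIn X 𝓘 := by
  set S : Set ℕ := (fun A : Submodule K E => finrank K A) '' {A | A ∈ 𝓘 ∧ A ≤ X} with hS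
  have hne : S.Nonempty := ⟨finrank K (⊥ : Submodule K E), ⟨⊥, ⟨hbot, bot_le⟩, rfl⟩⟩
  have hbdd : BddAbove S := ⟨finrank K E, by rintro n ⟨A, _, rfl⟩; exact A.finrank_le⟩
  obtain ⟨M, hM, hMr⟩ := Nat.sSup_mem hne hbdd
  exact ⟨M, hM.1, hM.2, fun B hB hBX => by have := le_csSup hbdd (⟨B, ⟨hB, hBX⟩, rfl⟩ : finrank K ↥B ∈ S); simpa [← hMr] using this⟩

lemma extend_maxIn {K E : Type*} [Field K] [AddCommGroup E] [Module K E] [FiniteDimensional K E]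
    (𝓘 : Set (Submodule K E))
    (hI3 : ∀ I J : Submodule K E, I ∈ 𝓘 → J ∈ 𝓘 → finrank K I < finrank K J →
      ∃ x : Submodule K E, finrank K x = 1 ∧ x ≤ J ∧ ¬ x ≤ I ∧ I ⊔ x ∈ 𝓘)
    (X M : Submodule K E) (hM : M ∈ maxIn X 𝓘)
    (I0 : Submodule K E) (hI0 : I0 ∈ 𝓘) (hle : I0 ≤ X) :
    ∃ I ∈ maxIn X 𝓘, I0 ≤ I := by
  obtain ⟨hM𝓘, hMX, hMmax⟩ := hM
  suffices h : ∀ k (I0 : Submodule K E), I0 ∈ 𝓘 → I0 ≤ X →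
      finrank K M - finrank K I0 ≤ k → ∃ I ∈ maxIn X 𝓘, I0 ≤ I by
    exact h (finrank K M - finrank K I0) I0 hI0 hle le_rfl
  intro k
  induction k with
  | zero =>
    intro I0 hI0 hle hk
    have hMle : finrank K M ≤ finrank K I0 := by omega
    exact ⟨I0, ⟨hI0, hle, fun B hB hBX => le_trans (hMmax B hB hBX) hMle⟩, le_rfl⟩
  | succ k ih =>
    intro I0 hI0 hle hk
    by_cases hlt : finrank K I0 < finrank K M
    · obtain ⟨x, hx1, hxM, hxI0, hsup⟩ := hI3 I0 M hI0 hM𝓘 hlt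
      have hinf : finrank K ↥(I0 ⊓ x) = 0 := by
        have h1 : finrank K ↥(I0 ⊓ x) ≤ finrank K x :=
          Submodule.finrank_mono inf_le_right
        rcases Nat.lt_or_ge (finrank K ↥(I0 ⊓ x)) 1 with h | h
        · omega
        · exfalso
          have heq : I0 ⊓ x = x :=
            Submodule.eq_of_le_of_finrank_eq inf_le_right (by omega)
          exact hxI0 (heq ▸ inf_le_left)
      have hdim : finrank K ↥(I0 ⊔ x) = finrank K I0 + 1 := by
        have := Submodule.finrank_sup_add_finrank_inf_eq I0 x
        omega
      obtain ⟨I, hI, hI0I⟩ :=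
        ih (I0 ⊔ x) hsup (sup_le hle (hxM.trans hMX)) (by omega)
      exact ⟨I, hI, le_trans le_sup_left hI0I⟩
    · exact ⟨I0, ⟨hI0, hle, fun B hB hBX => le_trans (hMmax B hB hBX) (by omega)⟩, le_rfl⟩

theorem stmt18 {K E : Type*} [Field K] [AddCommGroup E] [Module K E] [FiniteDimensional K E]
    (𝓘 : Set (Submodule K E))
    (hI1 : 𝓘.Nonempty)
    (hI2 : ∀ I J : Submodule K E, J ∈ 𝓘 → I ≤ J → I ∈ 𝓘)
    (hI3 : ∀ I J : Submodule K E, I ∈ 𝓘 → J ∈ 𝓘 → finrank K I < finrank K J →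
      ∃ x : Submodule K E, finrank K x = 1 ∧ x ≤ J ∧ ¬ x ≤ I ∧ I ⊔ x ∈ 𝓘)
    (hI4 : ∀ A B I J : Submodule K E, I ∈ maxIn A 𝓘 → J ∈ maxIn B 𝓘 →
      ∃ K' ∈ maxIn (A ⊔ B) 𝓘, K' ≤ I ⊔ J) :
    ((⊥ : Submodule K E) ∉ {D : Submodule K E | D ∉ 𝓘}) ∧
    (∀ D1 D2 : Submodule K E, D1 ∈ {D : Submodule K E | D ∉ 𝓘} → D1 ≤ D2 →
      D2 ∈ {D : Submodule K E | D ∉ 𝓘}) ∧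
    (∀ D1 D2 : Submodule K E, D1 ∈ {D : Submodule K E | D ∉ 𝓘} →
      D2 ∈ {D : Submodule K E | D ∉ 𝓘} → D1 ⊓ D2 ∉ {D : Submodule K E | D ∉ 𝓘} →
      ∀ D' : Submodule K E, D' ≤ D1 ⊔ D2 → finrank K D' + 1 = finrank K ↥(D1 ⊔ D2) →
        D' ∈ {D : Submodule K E | D ∉ 𝓘}) := by
  obtain ⟨J0, hJ0⟩ := hI1
  have hbot : (⊥ : Submodule K E) ∈ 𝓘 := hI2 ⊥ J0 hJ0 bot_le
  refine ⟨by simpa using hbot, ?_, ?_⟩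
  · intro D1 D2 hD1 hle hD2
    exact hD1 (hI2 D1 D2 hD2 hle)
  · intro D1 D2 hD1 hD2 hinter D' hD'le hD'dim hD'
    have hinf : D1 ⊓ D2 ∈ 𝓘 := not_not.mp hinter
    obtain ⟨M1, hM1⟩ := exists_maxIn 𝓘 hbot D1
    obtain ⟨M2, hM2⟩ := exists_maxIn 𝓘 hbot D2
    obtain ⟨I, hI, hIinf⟩ := extend_maxIn 𝓘 hI3 D1 M1 hM1 (D1 ⊓ D2) hinf inf_le_left
    obtain ⟨J, hJ, hJinf⟩ := extend_maxIn 𝓘 hI3 D2 M2 hM2 (D1 ⊓ D2) hinf inf_le_right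
    obtain ⟨K', hK', hK'le⟩ := hI4 D1 D2 I J hI hJ
    -- dimension counts
    have hID1 : finrank K I < finrank K D1 :=
      Submodule.finrank_lt_finrank_of_lt
        (lt_of_le_of_ne hI.2.1 (fun h => hD1 (h ▸ hI.1)))
    have hJD2 : finrank K J < finrank K D2 :=
      Submodule.finrank_lt_finrank_of_lt
        (lt_of_le_of_ne hJ.2.1 (fun h => hD2 (h ▸ hJ.1)))
    have hD'K' : finrank K D' ≤ finrank K K' := hK'.2.2 D' hD' hD'le
    have hK'IJ : finrank K K' ≤ finrank K ↥(I ⊔ J) := Submodule.finrank_mono hK'le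
    have hIJ : finrank K ↥(I ⊔ J) + finrank K ↥(I ⊓ J) = finrank K I + finrank K J :=
      Submodule.finrank_sup_add_finrank_inf_eq I J
    have hinfIJ : finrank K ↥(D1 ⊓ D2) ≤ finrank K ↥(I ⊓ J) :=
      Submodule.finrank_mono (le_inf hIinf hJinf)
    have hD12 : finrank K ↥(D1 ⊔ D2) + finrank K ↥(D1 ⊓ D2) = finrank K D1 + finrank K D2 :=
      Submodule.finrank_sup_add_finrank_inf_eq D1 D2
    omega
end

section
/- Let E be a finite-dimensional vector space over a field F and let D be a collection of subspaces of E satisfying the dependence axioms (D1), (D2), (D3). Then the complementary collection I := { I ∈ L(E) : I ∉ D } satisfies the independence axioms (I1), (I2), (I3), (I4). -/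
open Module

set_option linter.unusedSectionVars false

section Aux

variable {K E : Type*} [Field K] [AddCommGroup E] [Module K E] [FiniteDimensional K E]

lemma aux_finrank_sup_singleton {T : Submodule K E} {v : E} (hv : v ∉ T) :
    finrank K ↥(T ⊔ (K ∙ v)) = finrank K T + 1 := by
  have hv0 : v ≠ 0 := fun h => hv (h ▸ T.zero_mem)
  have hinf : T ⊓ (K ∙ v) = ⊥ := by
    rw [eq_bot_iff]
    intro x hx
    obtain ⟨hxT, hxv⟩ := Submodule.mem_inf.1 hx
    obtain ⟨c, rfl⟩ := Submodule.mem_span_singleton.1 hxv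
    rcases eq_or_ne c 0 with rfl | hc
    · simp
    · have : v ∈ T := by
        have := T.smul_mem c⁻¹ hxT
        rwa [smul_smul, inv_mul_cancel₀ hc, one_smul] at this
      exact absurd this hv
  have h := Submodule.finrank_sup_add_finrank_inf_eq T (K ∙ v)
  rw [hinf, finrank_bot, finrank_span_singleton hv0] at h
  omega

lemma aux_sup_span_add_mem {T : Submodule K E} {v w : E} (hv : v ∈ T) :
    T ⊔ (K ∙ (v + w)) = T ⊔ (K ∙ w) := by
  apply le_antisymm
  · refine sup_le le_sup_left ((Submodule.span_singleton_le_iff_mem _ _).2 ?_)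
    exact add_mem (Submodule.mem_sup_left hv)
      (Submodule.mem_sup_right (Submodule.mem_span_singleton_self w))
  · refine sup_le le_sup_left ((Submodule.span_singleton_le_iff_mem _ _).2 ?_)
    have h : (v + w) + (-v) ∈ T ⊔ (K ∙ (v + w)) :=
      add_mem (Submodule.mem_sup_right (Submodule.mem_span_singleton_self (v + w)))
        (Submodule.mem_sup_left (neg_mem hv))
    simpa using h

variable {𝓓 : Set (Submodule K E)}

lemma indep_of_le (hD2 : ∀ D1 D2 : Submodule K E, D1 ∈ 𝓓 → D1 ≤ D2 → D2 ∈ 𝓓)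
    {S T : Submodule K E} (hST : S ≤ T) (hT : T ∉ 𝓓) : S ∉ 𝓓 :=
  fun hS => hT (hD2 S T hS hST)

lemma dep_hyperplane
    (hD3 : ∀ D1 D2 : Submodule K E, D1 ∈ 𝓓 → D2 ∈ 𝓓 → D1 ⊓ D2 ∉ 𝓓 →
      ∀ D : Submodule K E, D ≤ D1 ⊔ D2 → finrank K D + 1 = finrank K ↥(D1 ⊔ D2) → D ∈ 𝓓)
    {T : Submodule K E} {v w : E}
    (hT : T ∉ 𝓓) (hv : v ∉ T) (hw : w ∉ T)
    (hdv : T ⊔ (K ∙ v) ∈ 𝓓) (hdw : T ⊔ (K ∙ w) ∈ 𝓓)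
    (hne : T ⊔ (K ∙ v) ≠ T ⊔ (K ∙ w)) :
    ∀ D : Submodule K E, D ≤ T ⊔ (K ∙ v) ⊔ (K ∙ w) →
      finrank K D + 1 = finrank K ↥(T ⊔ (K ∙ v) ⊔ (K ∙ w)) → D ∈ 𝓓 := by
  have hfv := aux_finrank_sup_singleton hv
  have hfw := aux_finrank_sup_singleton hw
  have hinf : (T ⊔ (K ∙ v)) ⊓ (T ⊔ (K ∙ w)) = T := by
    rcases lt_or_eq_of_le (inf_le_left : (T ⊔ (K ∙ v)) ⊓ (T ⊔ (K ∙ w)) ≤ T ⊔ (K ∙ v)) with hlt | heq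
    · have h2 : finrank K ↥((T ⊔ (K ∙ v)) ⊓ (T ⊔ (K ∙ w))) < finrank K T + 1 :=
        hfv ▸ Submodule.finrank_lt_finrank_of_lt hlt
      exact (Submodule.eq_of_le_of_finrank_le (le_inf le_sup_left le_sup_left) (by omega)).symm
    · have hle : T ⊔ (K ∙ v) ≤ T ⊔ (K ∙ w) := heq ▸ inf_le_right
      exact absurd (Submodule.eq_of_le_of_finrank_le hle (by omega)) hne
  have hsup : (T ⊔ (K ∙ v)) ⊔ (T ⊔ (K ∙ w)) = T ⊔ (K ∙ v) ⊔ (K ∙ w) := by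
    apply le_antisymm
    · exact sup_le le_sup_left (sup_le (le_sup_left.trans le_sup_left) le_sup_right)
    · exact sup_le le_sup_left (le_sup_right.trans le_sup_right)
  intro D hD hfr
  refine hD3 _ _ hdv hdw (by rw [hinf]; exact hT) D ?_ ?_
  · rw [hsup]; exact hD
  · rw [hsup]; exact hfr

/-- closure of an independent subspace -/
def depCl (𝓓 : Set (Submodule K E))
    (hD2 : ∀ D1 D2 : Submodule K E, D1 ∈ 𝓓 → D1 ≤ D2 → D2 ∈ 𝓓)
    (hD3 : ∀ D1 D2 : Submodule K E, D1 ∈ 𝓓 → D2 ∈ 𝓓 → D1 ⊓ D2 ∉ 𝓓 →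
      ∀ D : Submodule K E, D ≤ D1 ⊔ D2 → finrank K D + 1 = finrank K ↥(D1 ⊔ D2) → D ∈ 𝓓)
    (T : Submodule K E) (hT : T ∉ 𝓓) : Submodule K E where
  carrier := {v | v ∈ T ∨ T ⊔ (K ∙ v) ∈ 𝓓}
  zero_mem' := Or.inl T.zero_mem
  smul_mem' := by
    rintro c v (hv | hv)
    · exact Or.inl (T.smul_mem c hv)
    · rcases eq_or_ne c 0 with rfl | hc
      · exact Or.inl (by simpa using T.zero_mem)
      · refine Or.inr ?_
        have : (K ∙ (c • v)) = (K ∙ v) := Submodule.span_singleton_smul_eq (IsUnit.mk0 c hc) v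
        rwa [this]
  add_mem' := by
    rintro v w (hv | hv) (hw | hw)
    · exact Or.inl (T.add_mem hv hw)
    · exact Or.inr (by rwa [aux_sup_span_add_mem hv])
    · refine Or.inr ?_
      rw [show v + w = w + v from add_comm v w, aux_sup_span_add_mem hw]
      exact hv
    · -- both dependent extensions
      have hvT : v ∉ T := fun h => hT (by
        rwa [sup_eq_left.2 ((Submodule.span_singleton_le_iff_mem _ _).2 h)] at hv)
      have hwT : w ∉ T := fun h => hT (by
        rwa [sup_eq_left.2 ((Submodule.span_singleton_le_iff_mem _ _).2 h)] at hw)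
      by_cases hvw : v + w ∈ T
      · exact Or.inl hvw
      refine Or.inr ?_
      have hmemv : v ∈ T ⊔ (K ∙ v) := Submodule.mem_sup_right (Submodule.mem_span_singleton_self v)
      have hmemw : w ∈ T ⊔ (K ∙ w) := Submodule.mem_sup_right (Submodule.mem_span_singleton_self w)
      by_cases heq : T ⊔ (K ∙ v) = T ⊔ (K ∙ w)
      · have hmem : v + w ∈ T ⊔ (K ∙ v) := add_mem hmemv (heq ▸ hmemw)
        have hle : T ⊔ (K ∙ (v + w)) ≤ T ⊔ (K ∙ v) :=
          sup_le le_sup_left ((Submodule.span_singleton_le_iff_mem _ _).2 hmem)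
        have : T ⊔ (K ∙ (v + w)) = T ⊔ (K ∙ v) := by
          apply Submodule.eq_of_le_of_finrank_le hle
          rw [aux_finrank_sup_singleton hvw, aux_finrank_sup_singleton hvT]
        rw [this]; exact hv
      · have hwTv : w ∉ T ⊔ (K ∙ v) := by
          intro h
          have hle : T ⊔ (K ∙ w) ≤ T ⊔ (K ∙ v) :=
            sup_le le_sup_left ((Submodule.span_singleton_le_iff_mem _ _).2 h)
          exact heq (Submodule.eq_of_le_of_finrank_le hle (by
            rw [aux_finrank_sup_singleton hvT, aux_finrank_sup_singleton hwT])).symm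
        refine dep_hyperplane hD3 hT hvT hwT hv hw heq _ ?_ ?_
        · refine sup_le (le_sup_left.trans le_sup_left)
            ((Submodule.span_singleton_le_iff_mem _ _).2 ?_)
          exact add_mem ((le_sup_left : T ⊔ (K ∙ v) ≤ T ⊔ (K ∙ v) ⊔ (K ∙ w)) hmemv)
            (Submodule.mem_sup_right (Submodule.mem_span_singleton_self w))
        · rw [aux_finrank_sup_singleton hvw,
            aux_finrank_sup_singleton (T := T ⊔ (K ∙ v)) hwTv,
            aux_finrank_sup_singleton hvT]

variable (hD2 : ∀ D1 D2 : Submodule K E, D1 ∈ 𝓓 → D1 ≤ D2 → D2 ∈ 𝓓)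
variable (hD3 : ∀ D1 D2 : Submodule K E, D1 ∈ 𝓓 → D2 ∈ 𝓓 → D1 ⊓ D2 ∉ 𝓓 →
      ∀ D : Submodule K E, D ≤ D1 ⊔ D2 → finrank K D + 1 = finrank K ↥(D1 ⊔ D2) → D ∈ 𝓓)

lemma mem_depCl_of_dep {T : Submodule K E} {hT : T ∉ 𝓓} {v : E}
    (h : T ⊔ (K ∙ v) ∈ 𝓓) : v ∈ depCl 𝓓 hD2 hD3 T hT := Or.inr h

lemma le_depCl {T : Submodule K E} (hT : T ∉ 𝓓) : T ≤ depCl 𝓓 hD2 hD3 T hT :=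
  fun _ hv => Or.inl hv

lemma dep_of_mem_depCl {T : Submodule K E} {hT : T ∉ 𝓓} {v : E}
    (h : v ∈ depCl 𝓓 hD2 hD3 T hT) (hvT : v ∉ T) : T ⊔ (K ∙ v) ∈ 𝓓 :=
  h.resolve_left hvT

lemma not_mem_depCl {T : Submodule K E} {hT : T ∉ 𝓓} {v : E}
    (h : v ∉ depCl 𝓓 hD2 hD3 T hT) : v ∉ T ∧ T ⊔ (K ∙ v) ∉ 𝓓 :=
  ⟨fun h' => h (Or.inl h'), fun h' => h (Or.inr h')⟩

lemma exists_hyperplane_aux : ∀ d : ℕ, ∀ U T : Submodule K E, U ≤ T →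
    finrank K T = finrank K U + d + 1 →
    ∃ W : Submodule K E, U ≤ W ∧ W ≤ T ∧ finrank K W + 1 = finrank K T := by
  intro d
  induction d with
  | zero => exact fun U T hUT h => ⟨U, le_rfl, hUT, by omega⟩
  | succ d ih =>
    intro U T hUT h
    have hne : ¬ T ≤ U := fun hle => by have := Submodule.finrank_mono hle; omega
    obtain ⟨v, hvT, hvU⟩ := SetLike.not_le_iff_exists.1 hne
    have h' : finrank K ↥(U ⊔ (K ∙ v)) = finrank K U + 1 := aux_finrank_sup_singleton hvU
    obtain ⟨W, hW1, hW2, hW3⟩ := ih (U ⊔ (K ∙ v)) T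
      (sup_le hUT ((Submodule.span_singleton_le_iff_mem _ _).2 hvT)) (by omega)
    exact ⟨W, le_sup_left.trans hW1, hW2, hW3⟩

lemma claimC_of_le {T S : Submodule K E} (hT : T ∉ 𝓓) (hS : S ∉ 𝓓)
    (hScl : S ≤ depCl 𝓓 hD2 hD3 T hT) (hTS : T ≤ S) : finrank K S ≤ finrank K T := by
  by_contra hlt
  push_neg at hlt
  have hns : ¬ S ≤ T := fun h => absurd (Submodule.finrank_mono h) (by omega)
  obtain ⟨v, hvS, hvT⟩ := SetLike.not_le_iff_exists.1 hns
  have hd : T ⊔ (K ∙ v) ∈ 𝓓 := (hScl hvS).resolve_left hvT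
  have hle : T ⊔ (K ∙ v) ≤ S := sup_le hTS ((Submodule.span_singleton_le_iff_mem _ _).2 hvS)
  exact hS (hD2 _ _ hd hle)

lemma claimC : ∀ μ : ℕ, ∀ (T S : Submodule K E) (hT : T ∉ 𝓓), S ∉ 𝓓 →
    S ≤ depCl 𝓓 hD2 hD3 T hT →
    (finrank K E + 1) * finrank K T + (finrank K T - finrank K ↥(S ⊓ T)) ≤ μ →
    finrank K S ≤ finrank K T := by
  intro μ
  induction μ with
  | zero =>
    intro T S hT hS hScl hμ
    have h1 : (finrank K E + 1) * finrank K T = 0 := by omega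
    have h2 : finrank K T = 0 := by
      rcases Nat.mul_eq_zero.1 h1 with h | h
      · omega
      · exact h
    have hbot : T = ⊥ := Submodule.finrank_eq_zero.1 h2
    exact claimC_of_le hD2 hD3 hT hS hScl (hbot ▸ bot_le)
  | succ μ ih =>
    intro T S hT hS hScl hμ
    by_cases hTS : T ≤ S
    · exact claimC_of_le hD2 hD3 hT hS hScl hTS
    by_contra hlt
    push_neg at hlt
    have hSTlt : S ⊓ T < T :=
      lt_of_le_of_ne inf_le_right (fun h => hTS (by rw [← h]; exact inf_le_left))
    have hSTfr : finrank K ↥(S ⊓ T) < finrank K T := Submodule.finrank_lt_finrank_of_lt hSTlt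
    obtain ⟨T0, hT0ge, hT0le, hT0fr⟩ := exists_hyperplane_aux
      (finrank K T - finrank K ↥(S ⊓ T) - 1) (S ⊓ T) T inf_le_right (by omega)
    have hT0 : T0 ∉ 𝓓 := indep_of_le hD2 hT0le hT
    have hNbd : finrank K T0 ≤ finrank K E := Submodule.finrank_le T0
    by_cases hb : ∀ v ∈ S, v ∈ depCl 𝓓 hD2 hD3 T0 hT0
    · -- case (a): recurse with smaller T
      have hS0 : S ≤ depCl 𝓓 hD2 hD3 T0 hT0 := fun v hv => hb v hv
      have hmul : (finrank K E + 1) * finrank K T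
          = (finrank K E + 1) * finrank K T0 + (finrank K E + 1) := by
        rw [show finrank K T = finrank K T0 + 1 from by omega]; ring
      have hrec := ih T0 S hT0 hS hS0 (by omega)
      omega
    · push_neg at hb
      obtain ⟨v, hvS, hvcl⟩ := hb
      obtain ⟨hvT0, hvdep⟩ := not_mem_depCl hD2 hD3 hvcl
      have hvT : v ∉ T := fun h => hvT0 (hT0ge (Submodule.mem_inf.2 ⟨hvS, h⟩))
      have hT'fr : finrank K ↥(T0 ⊔ (K ∙ v)) = finrank K T := by
        rw [aux_finrank_sup_singleton hvT0]; omega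
      have hT' : T0 ⊔ (K ∙ v) ∉ 𝓓 := hvdep
      have hnt : ¬ T ≤ T0 := fun h => by have := Submodule.finrank_mono h; omega
      obtain ⟨y, hyT, hyT0⟩ := SetLike.not_le_iff_exists.1 hnt
      have hTeq : T0 ⊔ (K ∙ y) = T := Submodule.eq_of_le_of_finrank_le
        (sup_le hT0le ((Submodule.span_singleton_le_iff_mem _ _).2 hyT))
        (by rw [aux_finrank_sup_singleton hyT0]; omega)
      have hvclT : T ⊔ (K ∙ v) ∈ 𝓓 := (hScl hvS).resolve_left hvT
      have hsupeq : T ⊔ (K ∙ v) = (T0 ⊔ (K ∙ v)) ⊔ (K ∙ y) := by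
        rw [← hTeq, sup_right_comm]
      -- T ⊔ K∙v ≤ depCl T'
      have hycl : y ∈ depCl 𝓓 hD2 hD3 (T0 ⊔ (K ∙ v)) hT' := Or.inr (by rw [← hsupeq]; exact hvclT)
      have hTcl : T ≤ depCl 𝓓 hD2 hD3 (T0 ⊔ (K ∙ v)) hT' := by
        rw [← hTeq]
        exact sup_le (le_sup_left.trans (le_depCl hD2 hD3 hT'))
          ((Submodule.span_singleton_le_iff_mem _ _).2 hycl)
      have hTvcl : T ⊔ (K ∙ v) ≤ depCl 𝓓 hD2 hD3 (T0 ⊔ (K ∙ v)) hT' := by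
        refine sup_le hTcl ((Submodule.span_singleton_le_iff_mem _ _).2 ?_)
        exact le_depCl hD2 hD3 hT' (Submodule.mem_sup_right (Submodule.mem_span_singleton_self v))
      have hSclT' : S ≤ depCl 𝓓 hD2 hD3 (T0 ⊔ (K ∙ v)) hT' := by
        intro z hzS
        by_cases hz1 : z ∈ T ⊔ (K ∙ v)
        · exact hTvcl hz1
        have hzT : z ∉ T := fun h => hz1 ((le_sup_left : T ≤ T ⊔ (K ∙ v)) h)
        have hzdep : T ⊔ (K ∙ z) ∈ 𝓓 := (hScl hzS).resolve_left hzT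
        by_contra hzcl
        obtain ⟨hzT', hz2⟩ := not_mem_depCl hD2 hD3 hzcl
        have hne2 : T ⊔ (K ∙ v) ≠ T ⊔ (K ∙ z) := fun h =>
          hz1 (h ▸ Submodule.mem_sup_right (Submodule.mem_span_singleton_self z))
        refine hz2 (dep_hyperplane hD3 hT hvT hzT hvclT hzdep hne2 _ ?_ ?_)
        · refine sup_le ((sup_le_sup_right hT0le _).trans le_sup_left)
            ((Submodule.span_singleton_le_iff_mem _ _).2 ?_)
          exact Submodule.mem_sup_right (Submodule.mem_span_singleton_self z)
        · rw [aux_finrank_sup_singleton (T := T ⊔ (K ∙ v)) hz1,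
            aux_finrank_sup_singleton hvT,
            aux_finrank_sup_singleton (T := T0 ⊔ (K ∙ v)) hzT']
          omega
      -- measure decreases
      have hST0 : S ⊓ T0 = S ⊓ T :=
        le_antisymm (inf_le_inf_left _ hT0le) (le_inf inf_le_left hT0ge)
      have hvST0 : v ∉ S ⊓ T0 := fun h => hvT0 (Submodule.mem_inf.1 h).2
      have hsub : (S ⊓ T0) ⊔ (K ∙ v) ≤ S ⊓ (T0 ⊔ (K ∙ v)) := by
        refine sup_le (inf_le_inf le_rfl le_sup_left) (le_inf
          ((Submodule.span_singleton_le_iff_mem _ _).2 hvS) ?_)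
        exact (Submodule.span_singleton_le_iff_mem _ _).2
          (Submodule.mem_sup_right (Submodule.mem_span_singleton_self v))
      have h5 : finrank K ↥(S ⊓ T) + 1 ≤ finrank K ↥(S ⊓ (T0 ⊔ (K ∙ v))) := by
        have := Submodule.finrank_mono hsub
        rw [aux_finrank_sup_singleton hvST0, hST0] at this
        omega
      have hrec := ih (T0 ⊔ (K ∙ v)) S hT' hS hSclT' (by rw [hT'fr]; omega)
      omega

include hD2 hD3 in
lemma exchange {I J : Submodule K E} (hI : I ∉ 𝓓) (hJ : J ∉ 𝓓)
    (hlt : finrank K I < finrank K J) :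
    ∃ v : E, v ∈ J ∧ v ∉ I ∧ I ⊔ (K ∙ v) ∉ 𝓓 := by
  by_contra h
  push_neg at h
  have hJcl : J ≤ depCl 𝓓 hD2 hD3 I hI := by
    intro v hv
    by_cases hvI : v ∈ I
    · exact Or.inl hvI
    · exact Or.inr (h v hv hvI)
  have := claimC hD2 hD3 ((finrank K E + 1) * finrank K I + finrank K I) I J hI hJ hJcl
    (by omega)
  omega

lemma exists_max_seed {X S0 : Submodule K E} (hS0 : S0 ∉ 𝓓) (hS0X : S0 ≤ X) :
    ∃ M : Submodule K E, S0 ≤ M ∧ M ≤ X ∧ M ∉ 𝓓 ∧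
      ∀ L : Submodule K E, L ∉ 𝓓 → S0 ≤ L → L ≤ X → finrank K L ≤ finrank K M := by
  classical
  let P : ℕ → Prop := fun n => ∃ M : Submodule K E, S0 ≤ M ∧ M ≤ X ∧ M ∉ 𝓓 ∧ finrank K M = n
  have hP0 : P (finrank K S0) := ⟨S0, le_rfl, hS0X, hS0, rfl⟩
  have hbd : ∀ n, P n → n ≤ finrank K E := by
    rintro n ⟨M, _, _, _, rfl⟩; exact Submodule.finrank_le M
  obtain ⟨M, hM1, hM2, hM3, hM4⟩ := Nat.findGreatest_spec (P := P) (hbd _ hP0) hP0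
  refine ⟨M, hM1, hM2, hM3, fun L hL hL0 hLX => ?_⟩
  rw [hM4]
  exact Nat.le_findGreatest (hbd _ ⟨L, hL0, hLX, hL, rfl⟩) ⟨L, hL0, hLX, hL, rfl⟩

lemma depCl_trans {Kk J : Submodule K E} (hK : Kk ∉ 𝓓) (hJ : J ∉ 𝓓)
    (hJK : J ≤ depCl 𝓓 hD2 hD3 Kk hK) :
    depCl 𝓓 hD2 hD3 J hJ ≤ depCl 𝓓 hD2 hD3 Kk hK := by
  intro z hz
  by_contra hzcl
  obtain ⟨hzK, hzdep⟩ := not_mem_depCl hD2 hD3 hzcl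
  have hzJ : J ⊔ (K ∙ z) ∈ 𝓓 := by
    rcases hz with h | h
    · exact absurd (hJK h) hzcl
    · exact h
  obtain ⟨M, hJM, hMcl, hM, hMmax⟩ := exists_max_seed (X := depCl 𝓓 hD2 hD3 Kk hK) hJ hJK
  have hMK : finrank K M ≤ finrank K Kk := claimC hD2 hD3
    ((finrank K E + 1) * finrank K Kk + finrank K Kk) Kk M hK hM hMcl (by omega)
  have hclKM : ∀ u, u ∈ depCl 𝓓 hD2 hD3 Kk hK → u ∈ depCl 𝓓 hD2 hD3 M hM := by
    intro u hu
    by_cases huM : u ∈ M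
    · exact Or.inl huM
    refine Or.inr ?_
    by_contra hMu
    have h1 : finrank K ↥(M ⊔ (K ∙ u)) = finrank K M + 1 := aux_finrank_sup_singleton huM
    have := hMmax (M ⊔ (K ∙ u)) hMu (hJM.trans le_sup_left)
      (sup_le hMcl ((Submodule.span_singleton_le_iff_mem _ _).2 hu))
    omega
  have hzM : z ∈ depCl 𝓓 hD2 hD3 M hM :=
    Or.inr (hD2 _ _ hzJ (sup_le_sup_right hJM _))
  have hfrKz : finrank K ↥(Kk ⊔ (K ∙ z)) = finrank K Kk + 1 := aux_finrank_sup_singleton hzK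
  obtain ⟨w, hwKz, hwM, hwdep⟩ := exchange hD2 hD3 hM hzdep (by omega)
  have hle : Kk ⊔ (K ∙ z) ≤ depCl 𝓓 hD2 hD3 M hM := by
    refine sup_le (fun u hu => hclKM u (le_depCl hD2 hD3 hK hu))
      ((Submodule.span_singleton_le_iff_mem _ _).2 hzM)
  exact hwdep ((hle hwKz).resolve_left hwM)

end Aux

theorem stmt19 {K E : Type*} [Field K] [AddCommGroup E] [Module K E] [FiniteDimensional K E]
    (𝓓 : Set (Submodule K E))
    (hD1 : (⊥ : Submodule K E) ∉ 𝓓)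
    (hD2 : ∀ D1 D2 : Submodule K E, D1 ∈ 𝓓 → D1 ≤ D2 → D2 ∈ 𝓓)
    (hD3 : ∀ D1 D2 : Submodule K E, D1 ∈ 𝓓 → D2 ∈ 𝓓 → D1 ⊓ D2 ∉ 𝓓 →
      ∀ D : Submodule K E, D ≤ D1 ⊔ D2 → finrank K D + 1 = finrank K ↥(D1 ⊔ D2) → D ∈ 𝓓) :
    ({I : Submodule K E | I ∉ 𝓓}.Nonempty) ∧
    (∀ I J : Submodule K E, J ∈ {I : Submodule K E | I ∉ 𝓓} → I ≤ J →
      I ∈ {I : Submodule K E | I ∉ 𝓓}) ∧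
    (∀ I J : Submodule K E, I ∈ {I : Submodule K E | I ∉ 𝓓} →
      J ∈ {I : Submodule K E | I ∉ 𝓓} → finrank K I < finrank K J →
      ∃ x : Submodule K E, finrank K x = 1 ∧ x ≤ J ∧ ¬ x ≤ I ∧
        I ⊔ x ∈ {I : Submodule K E | I ∉ 𝓓}) ∧
    (∀ A B I J : Submodule K E,
      I ∈ maxIn A {I : Submodule K E | I ∉ 𝓓} →
      J ∈ maxIn B {I : Submodule K E | I ∉ 𝓓} →
      ∃ K' ∈ maxIn (A ⊔ B) {I : Submodule K E | I ∉ 𝓓}, K' ≤ I ⊔ J) := by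
  refine ⟨⟨⊥, hD1⟩, fun I J hJ hIJ => indep_of_le hD2 hIJ hJ, ?_, ?_⟩
  · -- (I3)
    intro I J hI hJ hlt
    obtain ⟨v, hvJ, hvI, hvdep⟩ := exchange hD2 hD3 hI hJ hlt
    have hv0 : v ≠ 0 := fun h => hvI (h ▸ I.zero_mem)
    refine ⟨K ∙ v, finrank_span_singleton hv0,
      (Submodule.span_singleton_le_iff_mem _ _).2 hvJ,
      fun h => hvI (h (Submodule.mem_span_singleton_self v)), hvdep⟩
  · -- (I4)
    intro A B I J hI hJ
    obtain ⟨hInd, hIA, hImax⟩ := hI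
    obtain ⟨hJnd, hJB, hJmax⟩ := hJ
    obtain ⟨M, -, hMIJ, hM, hMmax⟩ :=
      exists_max_seed (𝓓 := 𝓓) (X := I ⊔ J) (S0 := ⊥) hD1 bot_le
    have hIJcl : I ⊔ J ≤ depCl 𝓓 hD2 hD3 M hM := by
      intro v hv
      by_cases hvM : v ∈ M
      · exact Or.inl hvM
      refine Or.inr ?_
      by_contra h
      have := hMmax (M ⊔ (K ∙ v)) h bot_le
        (sup_le hMIJ ((Submodule.span_singleton_le_iff_mem _ _).2 hv))
      rw [aux_finrank_sup_singleton hvM] at this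
      omega
    have hAclI : A ≤ depCl 𝓓 hD2 hD3 I hInd := by
      intro v hv
      by_cases h : v ∈ I
      · exact Or.inl h
      refine Or.inr ?_
      by_contra h'
      have := hImax (I ⊔ (K ∙ v)) h'
        (sup_le hIA ((Submodule.span_singleton_le_iff_mem _ _).2 hv))
      rw [aux_finrank_sup_singleton h] at this
      omega
    have hBclJ : B ≤ depCl 𝓓 hD2 hD3 J hJnd := by
      intro v hv
      by_cases h : v ∈ J
      · exact Or.inl h
      refine Or.inr ?_
      by_contra h'
      have := hJmax (J ⊔ (K ∙ v)) h'
        (sup_le hJB ((Submodule.span_singleton_le_iff_mem _ _).2 hv))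
      rw [aux_finrank_sup_singleton h] at this
      omega
    have hIcl : depCl 𝓓 hD2 hD3 I hInd ≤ depCl 𝓓 hD2 hD3 M hM :=
      depCl_trans hD2 hD3 hM hInd (le_sup_left.trans hIJcl)
    have hJcl : depCl 𝓓 hD2 hD3 J hJnd ≤ depCl 𝓓 hD2 hD3 M hM :=
      depCl_trans hD2 hD3 hM hJnd (le_sup_right.trans hIJcl)
    refine ⟨M, ⟨hM, hMIJ.trans (sup_le_sup hIA hJB), ?_⟩, hMIJ⟩
    intro L hL hLAB
    have hLcl : L ≤ depCl 𝓓 hD2 hD3 M hM :=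
      hLAB.trans (sup_le (hAclI.trans hIcl) (hBclJ.trans hJcl))
    exact claimC hD2 hD3 ((finrank K E + 1) * finrank K M + finrank K M) M L hM hL hLcl
      (by omega)
end
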